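/- arXiv:0801.0120 — 4 statements merged into one kernel-verified Lean document; each statement's English description precedes it below -/
import Mathlib

section
/- Let A' = (1, a_1, …, a_k) be an orderly currency and let a_{k+1} be an integer with a_{k+1} > a_k. Set m = ⌈a_{k+1}/a_k⌉ and let A = (1, a_1, …, a_k, a_{k+1}). Then A is orderly if and only if opt_A(m·a_k) = grd_A(m·a_k). -/
/-- The largest coin of the currency with coins `a 0, …, a k` that is `≤ c`
(or `0` if there is none). -/
def bestCoin (a : ℕ → ℕ) (k : ℕ) (c : ℕ) : ℕ :=
  ((Finset.range (k + 1)).filter fun j => a j ≤ c).sup a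

/-- The number of coins used by the greedy algorithm to pay the amount `c`,
using the currency with coins `a 0, …, a k`. -/
def grd (a : ℕ → ℕ) (k : ℕ) : ℕ → ℕ
  | 0 => 0
  | c + 1 =>
    if h : 1 ≤ bestCoin a k (c + 1) then
      grd a k (c + 1 - bestCoin a k (c + 1)) + 1
    else 0
  decreasing_by omega

/-- The minimal number of coins needed to pay the amount `c`,
using the currency with coins `a 0, …, a k`. -/
noncomputable def opt (a : ℕ → ℕ) (k : ℕ) (c : ℕ) : ℕ :=
  sInf {n | ∃ x : Fin (k + 1) → ℕ, (∑ i, x i) = n ∧ (∑ i, x i * a i.1) = c}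

/-- `a 0, …, a k` is a currency: it starts with the coin `1` and is strictly increasing. -/
def IsCurrency (a : ℕ → ℕ) (k : ℕ) : Prop :=
  a 0 = 1 ∧ ∀ i j : ℕ, i < j → j ≤ k → a i < a j

/-- The currency with coins `a 0, …, a k` is orderly: the greedy payment is
optimal for every positive amount. -/
def Orderly (a : ℕ → ℕ) (k : ℕ) : Prop :=
  ∀ c : ℕ, 0 < c → opt a k c = grd a k c

/-- The set `𝒜(a) = ⋃_{m ≥ 1} {m·a − l : 0 ≤ l ≤ m}`. -/
def calA (a : ℕ) : Set ℕ :=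
  {x | ∃ m l : ℕ, 1 ≤ m ∧ l ≤ m ∧ x = m * a - l}

/- ### basic lemmas -/

lemma grd_zero (a : ℕ → ℕ) (k : ℕ) : grd a k 0 = 0 := by rw [grd]

lemma grd_succ (a : ℕ → ℕ) (k c : ℕ) :
    grd a k (c + 1) = if 1 ≤ bestCoin a k (c + 1) then
      grd a k (c + 1 - bestCoin a k (c + 1)) + 1 else 0 := by
  rw [grd]; split <;> simp_all

lemma bestCoin_le_self (a : ℕ → ℕ) (k c : ℕ) : bestCoin a k c ≤ c := by
  apply Finset.sup_le
  intro j hj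
  exact (Finset.mem_filter.mp hj).2

lemma one_le_bestCoin (a : ℕ → ℕ) (k c : ℕ) (h1 : a 0 = 1) (hc : 1 ≤ c) :
    1 ≤ bestCoin a k c := by
  have h0 : 0 ∈ (Finset.range (k + 1)).filter fun j => a j ≤ c := by
    simp [Finset.mem_filter, h1, hc]
  calc 1 = a 0 := h1.symm
    _ ≤ _ := Finset.le_sup h0

lemma exists_bestCoin (a : ℕ → ℕ) (k c : ℕ) (h1 : a 0 = 1) (hc : 1 ≤ c) :
    ∃ j ≤ k, a j = bestCoin a k c := by
  have hne : ((Finset.range (k + 1)).filter fun j => a j ≤ c).Nonempty :=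
    ⟨0, by simp [h1, hc]⟩
  obtain ⟨j, hj, hsup⟩ := Finset.exists_mem_eq_sup _ hne a
  refine ⟨j, ?_, hsup.symm⟩
  have := (Finset.mem_filter.mp hj).1
  simp only [Finset.mem_range] at this
  omega

lemma coin_le_top (a : ℕ → ℕ) (k : ℕ) (hcur : IsCurrency a k) (j : ℕ) (hj : j ≤ k) :
    a j ≤ a k := by
  rcases eq_or_lt_of_le hj with rfl | h
  · exact le_rfl
  · exact (hcur.2 j k h le_rfl).le

lemma one_le_coin (a : ℕ → ℕ) (k : ℕ) (hcur : IsCurrency a k) (j : ℕ) (hj : j ≤ k) :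
    1 ≤ a j := by
  rcases Nat.eq_zero_or_pos j with rfl | h
  · exact hcur.1.ge
  · exact le_of_lt (hcur.1 ▸ hcur.2 0 j h hj)

lemma bestCoin_eq_top (a : ℕ → ℕ) (k c : ℕ) (hcur : IsCurrency a k) (h : a k ≤ c) :
    bestCoin a k c = a k := by
  apply le_antisymm
  · apply Finset.sup_le
    intro j hj
    have hjk : j ≤ k := by
      have := (Finset.mem_filter.mp hj).1
      simp only [Finset.mem_range] at this; omega
    exact coin_le_top a k hcur j hjk
  · exact Finset.le_sup (by simp [h])

lemma grd_peel (a : ℕ → ℕ) (k c : ℕ) (hcur : IsCurrency a k) (h : a k ≤ c) :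
    grd a k c = grd a k (c - a k) + 1 := by
  have hak : 1 ≤ a k := one_le_coin a k hcur k le_rfl
  obtain ⟨c', rfl⟩ : ∃ c', c = c' + 1 := ⟨c - 1, by omega⟩
  rw [grd_succ, bestCoin_eq_top a k _ hcur h, if_pos hak]

lemma grd_add (a : ℕ → ℕ) (k c : ℕ) (hcur : IsCurrency a k) :
    grd a k (c + a k) = grd a k c + 1 := by
  rw [grd_peel a k _ hcur (by omega), Nat.add_sub_cancel]

lemma grd_add_mul (a : ℕ → ℕ) (k : ℕ) (hcur : IsCurrency a k) (c t : ℕ) :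
    grd a k (c + t * a k) = grd a k c + t := by
  induction t with
  | zero => simp
  | succ t ih =>
    have : c + (t + 1) * a k = (c + t * a k) + a k := by ring
    rw [this, grd_add a k _ hcur, ih]; omega

/- ### opt lemmas -/

lemma opt_le (a : ℕ → ℕ) (k c : ℕ) (x : Fin (k + 1) → ℕ)
    (hval : (∑ i, x i * a i.1) = c) : opt a k c ≤ ∑ i, x i :=
  Nat.sInf_le ⟨x, rfl, hval⟩

lemma opt_zero (a : ℕ → ℕ) (k : ℕ) : opt a k 0 = 0 := by
  have := opt_le a k 0 (fun _ => 0) (by simp)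
  simpa using this

lemma exists_opt_rep (a : ℕ → ℕ) (k : ℕ) (h1 : a 0 = 1) (c : ℕ) :
    ∃ x : Fin (k + 1) → ℕ, (∑ i, x i) = opt a k c ∧ (∑ i, x i * a i.1) = c := by
  have hmem : c ∈ {n | ∃ x : Fin (k + 1) → ℕ, (∑ i, x i) = n ∧ (∑ i, x i * a i.1) = c} := by
    refine ⟨fun i => if i = 0 then c else 0, ?_, ?_⟩
    · simp [Finset.sum_ite_eq']
    · simp [ite_mul, Finset.sum_ite_eq', h1]
  have := Nat.sInf_mem ⟨c, hmem⟩
  exact this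

lemma opt_add_le (a : ℕ → ℕ) (k : ℕ) (h1 : a 0 = 1) (c d : ℕ) :
    opt a k (c + d) ≤ opt a k c + opt a k d := by
  obtain ⟨x, hx1, hx2⟩ := exists_opt_rep a k h1 c
  obtain ⟨y, hy1, hy2⟩ := exists_opt_rep a k h1 d
  have := opt_le a k (c + d) (fun i => x i + y i) (by
    simp only [add_mul, Finset.sum_add_distrib, hx2, hy2])
  calc opt a k (c + d) ≤ ∑ i, (x i + y i) := this
    _ = opt a k c + opt a k d := by rw [Finset.sum_add_distrib, hx1, hy1]

lemma opt_coin_le (a : ℕ → ℕ) (k : ℕ) (j : ℕ) (hj : j ≤ k) (t : ℕ) :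
    opt a k (t * a j) ≤ t := by
  have hle := opt_le a k (t * a j)
    (fun i => if i = ⟨j, by omega⟩ then t else 0) (by
      simp [ite_mul, Finset.sum_ite_eq'])
  simpa [Finset.sum_ite_eq'] using hle

lemma opt_le_grd (a : ℕ → ℕ) (k : ℕ) (hcur : IsCurrency a k) :
    ∀ c, opt a k c ≤ grd a k c := by
  intro c
  induction c using Nat.strong_induction_on with
  | _ c ih =>
    match c with
    | 0 => rw [grd_zero, opt_zero]
    | c + 1 =>
      obtain ⟨j, hj, hbj⟩ := exists_bestCoin a k (c + 1) hcur.1 (by omega)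
      have h1b : 1 ≤ bestCoin a k (c + 1) := one_le_bestCoin a k _ hcur.1 (by omega)
      have hbs : bestCoin a k (c + 1) ≤ c + 1 := bestCoin_le_self a k _
      rw [grd_succ, if_pos h1b]
      have hsplit : c + 1 = (c + 1 - bestCoin a k (c + 1)) + bestCoin a k (c + 1) := by omega
      calc opt a k (c + 1)
          ≤ opt a k (c + 1 - bestCoin a k (c + 1)) + opt a k (bestCoin a k (c + 1)) := by
            nth_rewrite 1 [hsplit]; exact opt_add_le a k hcur.1 _ _
        _ ≤ grd a k (c + 1 - bestCoin a k (c + 1)) + 1 := by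
            have h1 : opt a k (bestCoin a k (c + 1)) ≤ 1 := by
              have := opt_coin_le a k j hj 1
              rwa [one_mul, hbj] at this
            have h2 : opt a k (c + 1 - bestCoin a k (c + 1)) ≤
                grd a k (c + 1 - bestCoin a k (c + 1)) := ih _ (by omega)
            omega

/- ### lemmas about the extended currency -/

section Ext

variable (a : ℕ → ℕ) (k b : ℕ)

lemma ext_currency (hcur : IsCurrency a k) (hb : a k < b) :
    IsCurrency (fun i => if i ≤ k then a i else b) (k + 1) := by
  constructor
  · simp [hcur.1]
  · intro i j hij hjk
    by_cases hj : j ≤ k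
    · simp only [if_pos (by omega : i ≤ k), if_pos hj]
      exact hcur.2 i j hij hj
    · have hjk1 : j = k + 1 := by omega
      simp only [if_neg hj]
      by_cases hi : i ≤ k
      · simp only [if_pos hi]
        exact lt_of_le_of_lt (coin_le_top a k hcur i hi) hb
      · omega

lemma bestCoin_ext_lt (c : ℕ) (hc : c < b) :
    bestCoin (fun i => if i ≤ k then a i else b) (k + 1) c = bestCoin a k c := by
  unfold bestCoin
  rw [show k + 1 + 1 = (k + 1) + 1 from rfl, Finset.range_add_one, Finset.filter_insert,
    if_neg (by simp; omega)]
  apply Finset.sup_congr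
  · apply Finset.filter_congr
    intro j hj
    simp only [Finset.mem_range] at hj
    simp [if_pos (by omega : j ≤ k)]
  · intro j hj
    have hjk : j ≤ k := by
      have := Finset.mem_of_mem_filter j hj
      simp only [Finset.mem_range] at this; omega
    simp [hjk]

lemma bestCoin_ext_ge (hcur : IsCurrency a k) (hb : a k < b) (c : ℕ) (hc : b ≤ c) :
    bestCoin (fun i => if i ≤ k then a i else b) (k + 1) c = b := by
  apply le_antisymm
  · apply Finset.sup_le
    intro j hj
    have hjk : j ≤ k + 1 := by
      have := Finset.mem_of_mem_filter j hj
      simp only [Finset.mem_range] at this; omega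
    by_cases h : j ≤ k
    · simp only [if_pos h]
      exact le_of_lt (lt_of_le_of_lt (coin_le_top a k hcur j h) hb)
    · simp [h]
  · have hmem : k + 1 ∈ (Finset.range (k + 1 + 1)).filter
        fun j => (if j ≤ k then a j else b) ≤ c := by
      simp [hc]
    have := Finset.le_sup (f := fun i => if i ≤ k then a i else b) hmem
    simpa [bestCoin] using this

lemma grd_ext_lt (h1 : a 0 = 1) : ∀ c, c < b →
    grd (fun i => if i ≤ k then a i else b) (k + 1) c = grd a k c := by
  intro c
  induction c using Nat.strong_induction_on with
  | _ c ih =>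
    match c with
    | 0 => intro _; rw [grd_zero, grd_zero]
    | c + 1 =>
      intro hc
      rw [grd_succ, grd_succ, bestCoin_ext_lt a k b (c + 1) hc]
      have h1b : 1 ≤ bestCoin a k (c + 1) := one_le_bestCoin a k _ h1 (by omega)
      have hbs : bestCoin a k (c + 1) ≤ c + 1 := bestCoin_le_self a k _
      rw [if_pos h1b, if_pos h1b]
      congr 1
      exact ih _ (by omega) (by omega)

lemma grd_ext_peel (hcur : IsCurrency a k) (hb : a k < b) (c : ℕ) (hc : b ≤ c) :
    grd (fun i => if i ≤ k then a i else b) (k + 1) c =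
      grd (fun i => if i ≤ k then a i else b) (k + 1) (c - b) + 1 := by
  have hb1 : 1 ≤ b := lt_of_le_of_lt (one_le_coin a k hcur k le_rfl) hb |>.le
  obtain ⟨c', rfl⟩ : ∃ c', c = c' + 1 := ⟨c - 1, by omega⟩
  rw [grd_succ, bestCoin_ext_ge a k b hcur hb _ hc, if_pos hb1]

end Ext

/- ### the key lemma -/

lemma opt_eq_grd_all (a : ℕ → ℕ) (k : ℕ) (hord : Orderly a k) (c : ℕ) :
    opt a k c = grd a k c := by
  rcases Nat.eq_zero_or_pos c with rfl | h
  · rw [opt_zero, grd_zero]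
  · exact hord c h

lemma grd_ext_le_grd (a : ℕ → ℕ) (k : ℕ) (hcur : IsCurrency a k) (hord : Orderly a k)
    (b : ℕ) (hb : a k < b) (m : ℕ) (hbm : b ≤ m * a k) (hmb : m * a k < b + a k)
    (H : grd a k (m * a k - b) + 1 ≤ m) :
    ∀ c, grd (fun i => if i ≤ k then a i else b) (k + 1) c ≤ grd a k c := by
  have hak : 1 ≤ a k := one_le_coin a k hcur k le_rfl
  have hb1 : 1 ≤ b := by omega
  intro c
  induction c using Nat.strong_induction_on with
  | _ c ih =>
    by_cases hcb : c < b
    · rw [grd_ext_lt a k b hcur.1 c hcb]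
    · push_neg at hcb
      set q := c / a k with hq
      set r := c % a k with hr
      have hcqr : c = r + q * a k := by rw [hq, hr, Nat.mod_add_div']
      have hrk : r < a k := Nat.mod_lt _ (by omega)
      rw [grd_ext_peel a k b hcur hb c hcb]
      have hqm1 : m - 1 ≤ q := by
        have h1 : (m - 1) * a k ≤ c := by
          have : (m - 1) * a k + a k = m * a k := by
            have hm1 : 1 ≤ m := by nlinarith
            nlinarith [Nat.sub_add_cancel hm1]
          omega
        rw [hq]
        exact (Nat.le_div_iff_mul_le (by omega)).mpr h1
      have hgrdc : grd a k c = grd a k r + q := by rw [hcqr, grd_add_mul a k hcur]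
      by_cases hqge : m ≤ q
      · -- c - b = (r + (m * a k - b)) + (q - m) * a k
        have hqd : q * a k = m * a k + (q - m) * a k := by
          rw [← Nat.add_mul]; congr 1; omega
        have hd : c - b = (r + (m * a k - b)) + (q - m) * a k := by omega
        have step1 : grd (fun i => if i ≤ k then a i else b) (k + 1) (c - b)
            ≤ grd a k (c - b) := ih _ (by omega)
        have step2 : grd a k (c - b) = grd a k (r + (m * a k - b)) + (q - m) := by
          rw [hd, grd_add_mul a k hcur]
        have step3 : grd a k (r + (m * a k - b)) ≤ grd a k r + grd a k (m * a k - b) := by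
          have h := opt_add_le a k hcur.1 r (m * a k - b)
          rwa [opt_eq_grd_all a k hord, opt_eq_grd_all a k hord,
            opt_eq_grd_all a k hord] at h
        omega
      · -- q = m - 1
        have hqeq : q = m - 1 := by omega
        have hm1 : 1 ≤ m := by omega
        have hmq : m * a k = q * a k + a k := by
          have hq1 : m = q + 1 := by omega
          rw [hq1]; ring
        set s := b - q * a k with hs
        have hs1 : 1 ≤ s := by omega
        have hsk : s ≤ a k := by omega
        have hsr : s ≤ r := by omega
        have hcbrs : c - b = r - s := by omega
        have hres : m * a k - b = a k - s := by omega
        rw [grd_ext_lt a k b hcur.1 (c - b) (by omega), hcbrs]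
        -- claim : grd a k (r - s) + 1 ≤ grd a k r + grd a k (a k - s)
        have hclaim : grd a k (r - s) + 1 ≤ grd a k r + grd a k (a k - s) := by
          have e1 : grd a k ((r - s) + a k) = grd a k (r - s) + 1 := grd_add a k _ hcur
          have e2 : (r - s) + a k = r + (a k - s) := by omega
          have e3 : grd a k (r + (a k - s)) ≤ grd a k r + grd a k (a k - s) := by
            have h := opt_add_le a k hcur.1 r (a k - s)
            rwa [opt_eq_grd_all a k hord, opt_eq_grd_all a k hord,
              opt_eq_grd_all a k hord] at h
          rw [e2] at e1
          omega
        rw [hres] at H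
        calc grd a k (r - s) + 1 ≤ grd a k r + grd a k (a k - s) := hclaim
          _ ≤ grd a k r + (m - 1) := by omega
          _ = grd a k r + q := by rw [hqeq]
          _ = grd a k c := hgrdc.symm

lemma grd_ext_le_opt (a : ℕ → ℕ) (k : ℕ) (hcur : IsCurrency a k) (hord : Orderly a k)
    (b : ℕ) (hb : a k < b) (m : ℕ) (hbm : b ≤ m * a k) (hmb : m * a k < b + a k)
    (H : grd a k (m * a k - b) + 1 ≤ m) :
    ∀ c, grd (fun i => if i ≤ k then a i else b) (k + 1) c ≤
      opt (fun i => if i ≤ k then a i else b) (k + 1) c := by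
  set A : ℕ → ℕ := fun i => if i ≤ k then a i else b with hA
  have hA1 : A 0 = 1 := by simp [hA, hcur.1]
  have hb1 : 1 ≤ b := by
    have := one_le_coin a k hcur k le_rfl; omega
  intro c
  induction c using Nat.strong_induction_on with
  | _ c ih =>
    rcases Nat.eq_zero_or_pos c with rfl | hc
    · rw [grd_zero]; omega
    obtain ⟨x, hx1, hx2⟩ := exists_opt_rep A (k + 1) hA1 c
    set j : Fin (k + 2) := Fin.last (k + 1) with hj
    have hAj : A j.1 = b := by simp [hA, hj]
    by_cases hxj : x j = 0
    · -- the optimal representation avoids the new coin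
      have e1 := Fin.sum_univ_castSucc (f := x)
      have e2 := Fin.sum_univ_castSucc (f := fun i : Fin (k + 1 + 1) => x i * A i.1)
      have h1 : ∑ i : Fin (k + 1), x i.castSucc = opt A (k + 1) c := by
        rw [← hx1, e1, hxj, add_zero]
      have h2 : ∑ i : Fin (k + 1), x i.castSucc * a i.1 = c := by
        rw [← hx2, e2]
        have hxl : x (Fin.last (k + 1)) = 0 := hxj
        rw [hxl, zero_mul, add_zero]
        apply Finset.sum_congr rfl
        intro i _
        have hile : (i : ℕ) ≤ k := by
          have : (i : ℕ) < k + 1 := i.isLt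
          omega
        have hcast : ((i.castSucc : Fin (k + 2)) : ℕ) = (i : ℕ) := rfl
        simp only [hA, hcast]
        rw [if_pos hile]
      have hle : opt a k c ≤ opt A (k + 1) c := by
        rw [← h1]
        exact opt_le a k c _ h2
      calc grd A (k + 1) c ≤ grd a k c :=
            grd_ext_le_grd a k hcur hord b hb m hbm hmb H c
        _ = opt a k c := (hord c hc).symm
        _ ≤ opt A (k + 1) c := hle
    · -- the optimal representation uses the new coin
      have hxj1 : 1 ≤ x j := by omega
      have hsplit : ∑ i, x i = (∑ i ∈ Finset.univ.erase j, x i) + x j :=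
        (Finset.sum_erase_add _ _ (Finset.mem_univ j)).symm
      have hsplit2 : ∑ i, x i * A i.1 =
          (∑ i ∈ Finset.univ.erase j, x i * A i.1) + x j * b := by
        rw [← hAj]
        exact (Finset.sum_erase_add _ _ (Finset.mem_univ j)).symm
      have hcb : b ≤ c := by
        rw [← hx2, hsplit2]
        calc b = 1 * b := (one_mul b).symm
          _ ≤ x j * b := Nat.mul_le_mul_right b hxj1
          _ ≤ _ := Nat.le_add_left _ _
      have hpeel : grd A (k + 1) c = grd A (k + 1) (c - b) + 1 :=
        grd_ext_peel a k b hcur hb c hcb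
      rw [hpeel]
      -- removing one coin `b` gives a representation of `c - b`
      have hrep : opt A (k + 1) (c - b) ≤ opt A (k + 1) c - 1 := by
        have hval : ∑ i, Function.update x j (x j - 1) i * A i.1 = c - b := by
          have hsp : ∑ i, Function.update x j (x j - 1) i * A i.1 =
              (∑ i ∈ Finset.univ.erase j, Function.update x j (x j - 1) i * A i.1) +
                (x j - 1) * b := by
            rw [← hAj]
            have := (Finset.sum_erase_add Finset.univ
              (fun i => Function.update x j (x j - 1) i * A i.1) (Finset.mem_univ j)).symm
            rwa [Function.update_self] at this
          rw [hsp]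
          have hcong : ∑ i ∈ Finset.univ.erase j, Function.update x j (x j - 1) i * A i.1 =
              ∑ i ∈ Finset.univ.erase j, x i * A i.1 := by
            apply Finset.sum_congr rfl
            intro i hi
            rw [Function.update_of_ne (Finset.ne_of_mem_erase hi)]
          rw [hcong]
          have hc2 := hx2
          rw [hsplit2] at hc2
          have hxb : x j * b = (x j - 1) * b + b := by
            have : x j = (x j - 1) + 1 := by omega
            nth_rewrite 1 [this]; ring
          omega
        have hsum : ∑ i, Function.update x j (x j - 1) i = opt A (k + 1) c - 1 := by
          have hsp : ∑ i, Function.update x j (x j - 1) i =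
              (∑ i ∈ Finset.univ.erase j, Function.update x j (x j - 1) i) + (x j - 1) := by
            have := (Finset.sum_erase_add Finset.univ
              (Function.update x j (x j - 1)) (Finset.mem_univ j)).symm
            rwa [Function.update_self] at this
          rw [hsp]
          have hcong : ∑ i ∈ Finset.univ.erase j, Function.update x j (x j - 1) i =
              ∑ i ∈ Finset.univ.erase j, x i := by
            apply Finset.sum_congr rfl
            intro i hi
            rw [Function.update_of_ne (Finset.ne_of_mem_erase hi)]
          rw [hcong, ← hx1, hsplit]
          omega
        calc opt A (k + 1) (c - b) ≤ ∑ i, Function.update x j (x j - 1) i :=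
              opt_le A (k + 1) (c - b) _ hval
          _ = opt A (k + 1) c - 1 := hsum
      have hopt1 : 1 ≤ opt A (k + 1) c := by
        rw [← hx1]
        calc 1 ≤ x j := hxj1
          _ ≤ ∑ i, x i := Finset.single_le_sum (fun i _ => Nat.zero_le (x i))
              (Finset.mem_univ j)
      have hrec : grd A (k + 1) (c - b) ≤ opt A (k + 1) (c - b) := ih _ (by omega)
      have hgoal : grd A (k + 1) (c - b) + 1 ≤ opt A (k + 1) c := by omega
      exact hgoal

/-- **One-point theorem.** If `A' = (1, a 1, …, a k)` is an orderly currency and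
`b = a_{k+1} > a k`, then with `m = ⌈b / a k⌉` the extended currency
`A = (1, a 1, …, a k, b)` is orderly iff `opt_A (m * a k) = grd_A (m * a k)`. -/
theorem one_point_theorem (a : ℕ → ℕ) (k : ℕ)
    (hcur : IsCurrency a k) (hord : Orderly a k)
    (b : ℕ) (hb : a k < b)
    (m : ℕ) (hm : m = (b + a k - 1) / a k) :
    Orderly (fun i => if i ≤ k then a i else b) (k + 1) ↔
      opt (fun i => if i ≤ k then a i else b) (k + 1) (m * a k) =
        grd (fun i => if i ≤ k then a i else b) (k + 1) (m * a k) := by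
  have hak : 1 ≤ a k := one_le_coin a k hcur k le_rfl
  have hb1 : 1 ≤ b := by omega
  -- ceiling facts
  obtain ⟨D, hD⟩ : ∃ D, (b - 1) / a k = D := ⟨_, rfl⟩
  obtain ⟨R, hR⟩ : ∃ R, (b - 1) % a k = R := ⟨_, rfl⟩
  have hmq : m = D + 1 := by
    rw [hm, show b + a k - 1 = (b - 1) + a k by omega, Nat.add_div_right _ (by omega), hD]
  have hdm : a k * D + R = b - 1 := by rw [← hD, ← hR]; exact Nat.div_add_mod (b - 1) (a k)
  have hmod : R < a k := by rw [← hR]; exact Nat.mod_lt _ (by omega)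
  have hmm : m * a k = a k * D + a k := by rw [hmq]; ring
  have hbm : b ≤ m * a k := by omega
  have hmb' : m * a k < b + a k := by omega
  have hm1 : 1 ≤ m := by omega
  constructor
  · intro hOrd
    exact hOrd (m * a k) (by omega)
  · intro hpt
    -- the one-point hypothesis in its usable form
    have hoptle : opt (fun i => if i ≤ k then a i else b) (k + 1) (m * a k) ≤ m := by
      have := opt_coin_le (fun i => if i ≤ k then a i else b) (k + 1) k (by omega) m
      simpa using this
    have hgrd : grd (fun i => if i ≤ k then a i else b) (k + 1) (m * a k) =
        grd a k (m * a k - b) + 1 := by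
      rw [grd_ext_peel a k b hcur hb _ hbm, grd_ext_lt a k b hcur.1 _ (by omega)]
    have H : grd a k (m * a k - b) + 1 ≤ m := by
      rw [← hgrd, ← hpt]; exact hoptle
    intro c hc
    refine le_antisymm ?_ ?_
    · exact opt_le_grd _ (k + 1) (ext_currency a k b hcur hb) c
    · exact grd_ext_le_opt a k hcur hord b hb m hbm hmb' H c
end

section
/- If A = (1, a_1, …, a_k) is an orderly currency, then a_i − a_{i−1} ≥ a_1 − 1 for all i = 1, …, k. -/
namespace GapGeAux

/-- `x` is one of the coin values. -/
def CoinV (a : ℕ → ℕ) (k : ℕ) (x : ℕ) : Prop := ∃ j, j ≤ k ∧ a j = x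

variable {a : ℕ → ℕ} {k : ℕ}

lemma mono_le (hcur : IsCurrency a k) {i j : ℕ} (hij : i ≤ j) (hj : j ≤ k) :
    a i ≤ a j := by
  rcases eq_or_lt_of_le hij with h | h
  · exact le_of_eq (by rw [h])
  · exact le_of_lt (hcur.2 i j h hj)

lemma coinV_pos (hcur : IsCurrency a k) {x : ℕ} (hx : CoinV a k x) : 1 ≤ x := by
  obtain ⟨j, hj, rfl⟩ := hx
  calc 1 = a 0 := hcur.1.symm
  _ ≤ a j := mono_le hcur (Nat.zero_le _) hj

lemma coinV_le_top (hcur : IsCurrency a k) {x : ℕ} (hx : CoinV a k x) : x ≤ a k := by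
  obtain ⟨j, hj, rfl⟩ := hx
  exact mono_le hcur hj le_rfl

lemma coinV_one (hcur : IsCurrency a k) : CoinV a k 1 := ⟨0, Nat.zero_le _, hcur.1⟩

lemma coinV_a1 : CoinV a k (a 1) ∨ k = 0 := by
  rcases Nat.eq_zero_or_pos k with h | h
  · right; exact h
  · left; exact ⟨1, h, rfl⟩

/-! ### `opt` lemmas -/

lemma opt_le_rep (c : ℕ) (x : Fin (k + 1) → ℕ) (hx : (∑ i, x i * a i.1) = c) :
    opt a k c ≤ ∑ i, x i :=
  Nat.sInf_le ⟨x, rfl, hx⟩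

lemma single_sum (j : Fin (k + 1)) (v : ℕ) :
    (∑ i : Fin (k + 1), (if i = j then v else 0) * a i.1) = v * a j.1 := by
  rw [Finset.sum_eq_single j]
  · simp
  · intro b _ hb; simp [hb]
  · intro h; exact absurd (Finset.mem_univ j) h

lemma single_count (j : Fin (k + 1)) (v : ℕ) :
    (∑ i : Fin (k + 1), (if i = j then v else 0)) = v := by
  rw [Finset.sum_eq_single j]
  · simp
  · intro b _ hb; simp [hb]
  · intro h; exact absurd (Finset.mem_univ j) h

lemma opt_exists (hcur : IsCurrency a k) (c : ℕ) :
    ∃ x : Fin (k + 1) → ℕ, (∑ i, x i) = opt a k c ∧ (∑ i, x i * a i.1) = c := by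
  have hne : {n | ∃ x : Fin (k + 1) → ℕ, (∑ i, x i) = n ∧ (∑ i, x i * a i.1) = c}.Nonempty := by
    refine ⟨c, fun i => if i = 0 then c else 0, single_count 0 c, ?_⟩
    rw [single_sum]
    show c * a 0 = c
    rw [hcur.1, mul_one]
  obtain ⟨x, hx1, hx2⟩ := Nat.sInf_mem hne
  exact ⟨x, hx1, hx2⟩

lemma opt_zero : opt a k 0 = 0 := by
  have : opt a k 0 ≤ ∑ _i : Fin (k+1), 0 := opt_le_rep 0 (fun _ => 0) (by simp)
  simpa using this

lemma opt_pos (hcur : IsCurrency a k) {c : ℕ} (hc : 0 < c) : 0 < opt a k c := by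
  rcases Nat.eq_zero_or_pos (opt a k c) with h | h
  · exfalso
    obtain ⟨x, hx1, hx2⟩ := opt_exists hcur c
    rw [h] at hx1
    have : ∀ i ∈ Finset.univ, x i = 0 := by
      intro i _
      have := Finset.sum_eq_zero_iff.1 hx1
      exact this i (Finset.mem_univ i)
    have : (∑ i, x i * a i.1) = 0 := Finset.sum_eq_zero (by intro i hi; rw [this i hi, zero_mul])
    omega
  · exact h

lemma opt_coin_le (hx : CoinV a k x) : opt a k x ≤ 1 := by
  obtain ⟨j, hj, rfl⟩ := hx
  have : opt a k (a j) ≤ ∑ i : Fin (k+1), (if i = ⟨j, by omega⟩ then 1 else 0) := by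
    apply opt_le_rep
    rw [single_sum, one_mul]
  rwa [single_count] at this

lemma opt_coin (hcur : IsCurrency a k) {x : ℕ} (hx : CoinV a k x) : opt a k x = 1 := by
  have h1 := opt_coin_le (a := a) (k := k) hx
  have h2 := opt_pos hcur (coinV_pos hcur hx)
  omega

lemma coin_of_opt_one (hcur : IsCurrency a k) {c : ℕ} (hc : opt a k c = 1) :
    CoinV a k c := by
  obtain ⟨x, hx1, hx2⟩ := opt_exists hcur c
  rw [hc] at hx1
  -- find the index with x j ≠ 0
  have hex : ∃ j ∈ Finset.univ, x j ≠ 0 := by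
    by_contra h
    push_neg at h
    have : (∑ i, x i) = 0 := Finset.sum_eq_zero (fun i hi => h i hi)
    omega
  obtain ⟨j, _, hj⟩ := hex
  have hrest : ∑ i ∈ Finset.univ.erase j, x i = 0 := by
    have := Finset.add_sum_erase Finset.univ x (Finset.mem_univ j)
    omega
  have hxj : x j = 1 := by
    have := Finset.add_sum_erase Finset.univ x (Finset.mem_univ j)
    omega
  have : (∑ i, x i * a i.1) = a j.1 := by
    rw [← Finset.add_sum_erase Finset.univ (fun i => x i * a i.1) (Finset.mem_univ j), hxj,
      one_mul, Finset.sum_eq_zero, add_zero]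
    intro i hi
    rw [Finset.sum_eq_zero_iff.1 hrest i hi, zero_mul]
  exact ⟨j.1, by omega, by omega⟩

lemma opt_subadd (hcur : IsCurrency a k) (b c : ℕ) :
    opt a k (b + c) ≤ opt a k b + opt a k c := by
  obtain ⟨x, hx1, hx2⟩ := opt_exists hcur b
  obtain ⟨y, hy1, hy2⟩ := opt_exists hcur c
  have : opt a k (b + c) ≤ ∑ i, (x i + y i) := by
    apply opt_le_rep
    rw [Finset.sum_congr rfl (fun i _ => add_mul (x i) (y i) (a i.1)),
      Finset.sum_add_distrib, hx2, hy2]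
  rwa [Finset.sum_add_distrib, hx1, hy1] at this

/-! ### `bestCoin` lemmas -/

lemma bc_le (c : ℕ) : bestCoin a k c ≤ c := by
  apply Finset.sup_le
  intro j hj
  exact (Finset.mem_filter.1 hj).2

lemma le_bc {x c : ℕ} (hx : CoinV a k x) (hxc : x ≤ c) : x ≤ bestCoin a k c := by
  obtain ⟨j, hj, rfl⟩ := hx
  exact Finset.le_sup (Finset.mem_filter.2 ⟨Finset.mem_range.2 (by omega), hxc⟩)

lemma bc_pos (hcur : IsCurrency a k) {c : ℕ} (hc : 0 < c) : 1 ≤ bestCoin a k c := by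
  have := le_bc (coinV_one hcur) hc
  omega

lemma bc_coin (hcur : IsCurrency a k) {c : ℕ} (hc : 0 < c) : CoinV a k (bestCoin a k c) := by
  have hne : (((Finset.range (k + 1)).filter fun j => a j ≤ c)).Nonempty := by
    refine ⟨0, Finset.mem_filter.2 ⟨Finset.mem_range.2 (by omega), ?_⟩⟩
    rw [hcur.1]; exact hc
  obtain ⟨j, hj, hje⟩ := Finset.exists_mem_eq_sup _ hne a
  refine ⟨j, ?_, hje.symm⟩
  have := (Finset.mem_filter.1 hj).1
  rw [Finset.mem_range] at this
  omega

lemma bc_eq (hcur : IsCurrency a k) {b c : ℕ} (hb : CoinV a k b) (hbc : b ≤ c)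
    (hmax : ∀ w, CoinV a k w → w ≤ c → w ≤ b) : bestCoin a k c = b := by
  apply le_antisymm
  · apply Finset.sup_le
    intro j hj
    have hj' := Finset.mem_filter.1 hj
    exact hmax (a j) ⟨j, by have := Finset.mem_range.1 hj'.1; omega, rfl⟩ hj'.2
  · exact le_bc hb hbc

/-! ### `grd` lemmas -/

lemma grd_zero : grd a k 0 = 0 := by rw [grd]

lemma grd_step (hcur : IsCurrency a k) {c : ℕ} (hc : 0 < c) :
    grd a k c = grd a k (c - bestCoin a k c) + 1 := by
  obtain ⟨n, rfl⟩ := Nat.exists_eq_succ_of_ne_zero (by omega : c ≠ 0)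
  rw [grd]
  rw [dif_pos (bc_pos hcur (by omega))]

lemma grd_small (hcur : IsCurrency a k) : ∀ c : ℕ, c < a 1 → grd a k c = c := by
  intro c
  induction c using Nat.strong_induction_on with
  | _ c ih =>
    intro hc
    rcases Nat.eq_zero_or_pos c with rfl | hpos
    · exact grd_zero
    · have hbc : bestCoin a k c = 1 := by
        apply bc_eq hcur (coinV_one hcur) hpos
        intro w hw hwc
        obtain ⟨j, hj, rfl⟩ := hw
        rcases Nat.eq_zero_or_pos j with rfl | hj1
        · rw [hcur.1]
        · exfalso
          have : a 1 ≤ a j := mono_le hcur hj1 hj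
          omega
      rw [grd_step hcur hpos, hbc, ih (c - 1) (by omega) (by omega)]
      omega

/-! ### Orderly layer: facts about `f := opt` -/

lemma f_small (hcur : IsCurrency a k) (hord : Orderly a k) {c : ℕ} (hc : c < a 1) :
    opt a k c = c := by
  rcases Nat.eq_zero_or_pos c with rfl | hpos
  · exact opt_zero
  · rw [hord c hpos, grd_small hcur c hc]

lemma f_greedy (hcur : IsCurrency a k) (hord : Orderly a k) {c : ℕ} (hc : 0 < c) :
    opt a k c = opt a k (c - bestCoin a k c) + 1 := by
  rw [hord c hc, grd_step hcur hc]
  rcases Nat.eq_zero_or_pos (c - bestCoin a k c) with h | h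
  · rw [h, opt_zero, grd_zero]
  · rw [hord _ h]

/-! ### Main contradiction -/

lemma main_contra (hcur : IsCurrency a k) (hord : Orderly a k) {g x0 : ℕ}
    (hg : a 1 = g + 1) (hg2 : 2 ≤ g)
    (hx0 : CoinV a k x0) (hx02 : 2 ≤ x0) (hx0f : opt a k (x0 - 1) < g) : False := by
  classical
  set Bad : Set ℕ := {x | CoinV a k x ∧ 2 ≤ x ∧ opt a k (x - 1) < g} with hBadDef
  have hBadne : Bad.Nonempty := ⟨x0, hx0, hx02, hx0f⟩
  set m := sInf ((fun x => opt a k (x - 1)) '' Bad) with hmDef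
  have hmmem : m ∈ (fun x => opt a k (x - 1)) '' Bad := Nat.sInf_mem (hBadne.image _)
  obtain ⟨xm, hxmBad, hxmf⟩ := hmmem
  set Vset : Set ℕ := {x | x ∈ Bad ∧ opt a k (x - 1) = m} with hVsetDef
  have hVne : Vset.Nonempty := ⟨xm, hxmBad, hxmf⟩
  set V := sInf Vset with hVDef
  have hVmem : V ∈ Vset := Nat.sInf_mem hVne
  obtain ⟨⟨hVcoin, hV2, hVflt⟩, hVf⟩ := hVmem
  have hm_min : ∀ x, x ∈ Bad → m ≤ opt a k (x - 1) := fun x hx => Nat.sInf_le ⟨x, hx, rfl⟩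
  have hV_min : ∀ x, x ∈ Bad → opt a k (x - 1) = m → V ≤ x := fun x hx he => Nat.sInf_le ⟨hx, he⟩
  have hmg : m < g := by omega
  have lex : ∀ z, CoinV a k z → 2 ≤ z → z < V → opt a k (z - 1) ≤ m → False := by
    intro z hz hz2 hzV hzf
    have hzBad : z ∈ Bad := ⟨hz, hz2, by omega⟩
    have h1 := hm_min z hzBad
    have h2 := hV_min z hzBad (by omega)
    omega
  have hm1 : 1 ≤ m := by
    have := opt_pos hcur (show 0 < V - 1 by omega)
    omega
  have hVa1 : a 1 + 1 ≤ V := by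
    by_contra h
    push_neg at h
    obtain ⟨j, hj, hje⟩ := hVcoin
    have hj1 : 1 ≤ j := by
      rcases Nat.eq_zero_or_pos j with rfl | h'
      · rw [hcur.1] at hje; omega
      · exact h'
    have hle : a 1 ≤ a j := mono_le hcur hj1 hj
    have hVeq : V = a 1 := by omega
    have : opt a k (V - 1) = g := by
      have h1 : V - 1 = g := by omega
      rw [h1]
      exact f_small hcur hord (by omega)
    omega
  obtain ⟨W, hVW⟩ : ∃ W, V = W + 1 := ⟨V - 1, by omega⟩
  have hWa1 : a 1 ≤ W := by omega
  have hfW : opt a k W = m := by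
    have : V - 1 = W := by omega
    rw [← hVf, this]
  have hfV : opt a k V = 1 := opt_coin hcur hVcoin
  have hk1 : 1 ≤ k := by
    obtain ⟨j, hj, hje⟩ := hVcoin
    rcases Nat.eq_zero_or_pos j with rfl | h'
    · rw [hcur.1] at hje; omega
    · omega
  -- Step (✩)
  have star : ∀ x, CoinV a k x → (∃ w, CoinV a k w ∧ x < w ∧ w ≤ x + W) →
      CoinV a k (x + W) ∨ CoinV a k (x + W + 1) := by
    rintro x hx ⟨w, hw, hxw, hwle⟩
    have hfx : opt a k x = 1 := opt_coin hcur hx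
    have hfY : opt a k (x + W) ≤ 1 + m := by
      calc opt a k (x + W) ≤ opt a k x + opt a k W := opt_subadd hcur x W
      _ = 1 + m := by rw [hfx, hfW]
    have hY0 : 0 < x + W := by have := coinV_pos hcur hx; omega
    have hwb : w ≤ bestCoin a k (x + W) := le_bc hw hwle
    set b := bestCoin a k (x + W) with hbDef
    have hxb : x < b := lt_of_lt_of_le hxw hwb
    have hbY : b ≤ x + W := bc_le _
    have hgr : opt a k (x + W) = opt a k (x + W - b) + 1 := f_greedy hcur hord hY0
    rcases eq_or_lt_of_le hbY with hbeq | hblt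
    · left; rw [← hbeq]; exact bc_coin hcur hY0
    · by_cases hY1 : CoinV a k (x + W + 1)
      · right; exact hY1
      · exfalso
        have hbc1 : bestCoin a k (x + W + 1) = b := by
          apply bc_eq hcur (bc_coin hcur hY0) (by omega)
          intro u hu hule
          rcases eq_or_lt_of_le hule with h | h
          · exact absurd (h ▸ hu) hY1
          · exact le_bc hu (by omega)
        have hfY1le : opt a k (x + W + 1) ≤ 2 := by
          have hxw1 : x + W + 1 = x + V := by omega
          rw [hxw1]
          have h2 : opt a k (x + V) ≤ opt a k x + opt a k V := opt_subadd hcur _ _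
          rw [hfx, hfV] at h2
          omega
        have hgr1 : opt a k (x + W + 1) = opt a k (x + W + 1 - b) + 1 := by
          have := f_greedy hcur hord (show 0 < x + W + 1 by omega)
          rwa [hbc1] at this
        have hr1 : 1 ≤ x + W - b := by omega
        have hfr : opt a k (x + W - b) ≤ m := by omega
        have hrplus : x + W + 1 - b = (x + W - b) + 1 := by omega
        have hfrp : opt a k ((x + W - b) + 1) ≤ 1 := by
          rw [← hrplus]; omega
        have hfrp1 : opt a k ((x + W - b) + 1) = 1 :=
          le_antisymm hfrp (opt_pos hcur (by omega))
        have hz : CoinV a k ((x + W - b) + 1) := coin_of_opt_one hcur hfrp1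
        have hzW : (x + W - b) + 1 ≤ W := by omega
        have hzf : opt a k ((x + W - b) + 1 - 1) ≤ m := by
          have : (x + W - b) + 1 - 1 = x + W - b := by omega
          rw [this]; exact hfr
        exact lex _ hz (by omega) (by omega) hzf
  -- Q : largest coin with a coin in (Q, Q + W - 1]
  set Qs : Set ℕ := {x | CoinV a k x ∧ ∃ w, CoinV a k w ∧ x < w ∧ w + 1 ≤ x + W} with hQsDef
  have hQne : (1 : ℕ) ∈ Qs := by
    refine ⟨coinV_one hcur, a 1, ⟨1, hk1, rfl⟩, ?_, by omega⟩
    have := hcur.2 0 1 (by omega) hk1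
    rw [hcur.1] at this
    omega
  have hbdd : BddAbove Qs := ⟨a k, fun x hx => coinV_le_top hcur hx.1⟩
  set Q := sSup Qs with hQDef
  have hQmem : Q ∈ Qs := Nat.sSup_mem ⟨1, hQne⟩ hbdd
  obtain ⟨hQcoin, w0, hw0coin, hQw0, hw0le⟩ := hQmem
  have hQmax : ∀ x, x ∈ Qs → x ≤ Q := fun x hx => le_csSup hbdd hx
  have hQ1 : 1 ≤ Q := coinV_pos hcur hQcoin
  -- R : least coin above Q
  set Rs : Set ℕ := {x | CoinV a k x ∧ Q < x} with hRsDef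
  have hRne : Rs.Nonempty := ⟨w0, hw0coin, hQw0⟩
  set R := sInf Rs with hRDef
  have hRmem : R ∈ Rs := Nat.sInf_mem hRne
  obtain ⟨hRcoin, hQR⟩ := hRmem
  have hRmin : ∀ x, CoinV a k x → Q < x → R ≤ x := fun x h1 h2 => Nat.sInf_le ⟨h1, h2⟩
  have hRw0 : R ≤ w0 := hRmin w0 hw0coin hQw0
  -- A from star at Q
  obtain ⟨A, hAcoin, hAge, hAle⟩ : ∃ A, CoinV a k A ∧ Q + W ≤ A ∧ A ≤ Q + W + 1 := by
    rcases star Q hQcoin ⟨w0, hw0coin, hQw0, by omega⟩ with h | h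
    · exact ⟨Q + W, h, le_rfl, by omega⟩
    · exact ⟨Q + W + 1, h, by omega, le_rfl⟩
  have hRnot : R ∉ Qs := fun h => by have := hQmax R h; omega
  have hnowin : ∀ u, CoinV a k u → R < u → ¬(u + 1 ≤ R + W) := by
    intro u hu h1 h2
    exact hRnot ⟨hRcoin, u, hu, h1, h2⟩
  have hAR : R < A := by omega
  have hARW : R + W ≤ A := by
    by_contra h
    exact hnowin A hAcoin hAR (by omega)
  have hReq : R = Q + 1 := by omega
  have hgap : ∀ u, CoinV a k u → u ≤ Q + W → u ≤ Q + 1 := by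
    intro u hu hle
    by_contra h
    push_neg at h
    exact hnowin u hu (by omega) (by omega)
  -- m = 1
  have hQf : opt a k ((Q + 1) - 1) = 1 := by
    have : (Q + 1) - 1 = Q := by omega
    rw [this]; exact opt_coin hcur hQcoin
  have hmeq : m = 1 := by
    have := hm_min (Q + 1) ⟨hReq ▸ hRcoin, by omega, by omega⟩
    omega
  have hWcoin : CoinV a k W := coin_of_opt_one hcur (by rw [hfW, hmeq])
  have hbcY : bestCoin a k (Q + W) = Q + 1 := by
    apply bc_eq hcur (hReq ▸ hRcoin) (by omega)
    exact fun u hu hule => hgap u hu hule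
  have hfYle : opt a k (Q + W) ≤ 2 := by
    have h2 := opt_subadd hcur Q W
    rw [opt_coin hcur hQcoin, hfW, hmeq] at h2
    omega
  have hfYgr : opt a k (Q + W) = opt a k (W - 1) + 1 := by
    rw [f_greedy hcur hord (show 0 < Q + W by omega), hbcY]
    congr 2
    omega
  have hfW1 : opt a k (W - 1) = 1 :=
    le_antisymm (by omega) (opt_pos hcur (by omega))
  exact lex W hWcoin (by omega) (by omega) (by rw [hfW1]; omega)

end GapGeAux

/-- If `(1, a 1, …, a k)` is orderly then consecutive coins differ by at least
`a 1 - 1`. -/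
theorem gap_ge (a : ℕ → ℕ) (k : ℕ)
    (hcur : IsCurrency a k) (hord : Orderly a k) :
    ∀ i : ℕ, 1 ≤ i → i ≤ k → a 1 - 1 ≤ a i - a (i - 1) := by
  intro i hi1 hik
  by_contra hlt
  push_neg at hlt
  have hk1 : 1 ≤ k := le_trans hi1 hik
  have hprev : a (i - 1) < a i := hcur.2 (i - 1) i (by omega) hik
  have ha1 : 2 ≤ a 1 := by
    have h0 := hcur.1
    have := hcur.2 0 1 (by omega) hk1
    omega
  obtain ⟨g, hg⟩ : ∃ g, a 1 = g + 1 := ⟨a 1 - 1, by omega⟩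
  have hd1 : 1 ≤ a i - a (i - 1) := by omega
  have hdg : a i - a (i - 1) < g := by omega
  have hg2 : 2 ≤ g := by omega
  have hai2 : 2 ≤ a i := by
    have : 1 ≤ a (i - 1) := GapGeAux.coinV_pos hcur ⟨i - 1, by omega, rfl⟩
    omega
  have hbca : bestCoin a k (a i - 1) = a (i - 1) := by
    apply GapGeAux.bc_eq hcur ⟨i - 1, by omega, rfl⟩ (by omega)
    intro w hw hwle
    obtain ⟨j, hj, rfl⟩ := hw
    rcases le_or_gt j (i - 1) with h | h
    · exact GapGeAux.mono_le hcur h (by omega)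
    · exfalso
      have : a i ≤ a j := GapGeAux.mono_le hcur (by omega) hj
      omega
  have hf : opt a k (a i - 1) = a i - a (i - 1) := by
    rw [GapGeAux.f_greedy hcur hord (show 0 < a i - 1 by omega), hbca]
    have h1 : a i - 1 - a (i - 1) = (a i - a (i - 1)) - 1 := by omega
    rw [h1, GapGeAux.f_small hcur hord (show (a i - a (i - 1)) - 1 < a 1 by omega)]
    omega
  exact GapGeAux.main_contra hcur hord hg hg2 ⟨i, hik, rfl⟩ hai2 (by rw [hf]; omega)
end

section
/- A five-coin currency A = (1, a_1, a_2, a_3, a_4) is orderly if and only if either there exists an integer a ≥ 4 with (a_1, a_2, a_3, a_4) = (2, a, a+1, 2a), or A is totally orderly. -/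
namespace FCP

variable {W : ℕ → ℕ} {k : ℕ}

lemma bestCoin_le' {x m : ℕ} (h : ∀ i, i ≤ k → W i ≤ x → W i ≤ m) :
    bestCoin W k x ≤ m := by
  apply Finset.sup_le
  intro i hi
  rw [Finset.mem_filter, Finset.mem_range] at hi
  exact h i (by omega) hi.2

lemma le_bestCoin {x i : ℕ} (hi : i ≤ k) (hx : W i ≤ x) : W i ≤ bestCoin W k x :=
  Finset.le_sup (by rw [Finset.mem_filter, Finset.mem_range]; exact ⟨by omega, hx⟩)

lemma bestCoin_le_self {x : ℕ} : bestCoin W k x ≤ x :=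
  bestCoin_le' fun _ _ h => h

lemma one_le_bestCoin (h0 : W 0 = 1) {x : ℕ} (hx : 1 ≤ x) : 1 ≤ bestCoin W k x := by
  have := le_bestCoin (W := W) (k := k) (x := x) (i := 0) (by omega) (by omega)
  omega

lemma bestCoin_eq_of {x j : ℕ} (hj : j ≤ k) (hjx : W j ≤ x)
    (hmax : ∀ i, i ≤ k → W i ≤ x → W i ≤ W j) : bestCoin W k x = W j :=
  le_antisymm (bestCoin_le' hmax) (le_bestCoin hj hjx)

lemma bestCoin_mem (h0 : W 0 = 1) {x : ℕ} (hx : 1 ≤ x) :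
    ∃ j, j ≤ k ∧ bestCoin W k x = W j ∧ W j ≤ x := by
  classical
  have hne : ((Finset.range (k + 1)).filter fun j => W j ≤ x).Nonempty := by
    refine ⟨0, ?_⟩
    rw [Finset.mem_filter, Finset.mem_range]
    exact ⟨by omega, by omega⟩
  obtain ⟨j, hj, hjs⟩ := Finset.exists_mem_eq_sup _ hne W
  rw [Finset.mem_filter, Finset.mem_range] at hj
  exact ⟨j, by omega, hjs, hj.2⟩

lemma grd_zero : grd W k 0 = 0 := by rw [grd]

lemma grd_succ (h0 : W 0 = 1) {x : ℕ} (hx : 1 ≤ x) :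
    grd W k x = grd W k (x - bestCoin W k x) + 1 := by
  obtain ⟨y, rfl⟩ : ∃ y, x = y + 1 := ⟨x - 1, by omega⟩
  rw [grd, dif_pos (one_le_bestCoin h0 hx)]

lemma grd_pos (h0 : W 0 = 1) {x : ℕ} (hx : 1 ≤ x) : 1 ≤ grd W k x := by
  rw [grd_succ h0 hx]; omega

lemma grd_eq_zero_iff (h0 : W 0 = 1) {x : ℕ} : grd W k x = 0 ↔ x = 0 := by
  constructor
  · intro h
    by_contra hx
    have := grd_pos (W := W) (k := k) h0 (x := x) (by omega)
    omega
  · rintro rfl; exact grd_zero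

lemma grd_top (h0 : W 0 = 1) (htop : ∀ i, i ≤ k → W i ≤ W k) {x : ℕ} (hx : W k ≤ x) :
    grd W k x = grd W k (x - W k) + 1 := by
  have h1 : 1 ≤ W k := by have := htop 0 (by omega); omega
  have hb : bestCoin W k x = W k := bestCoin_eq_of le_rfl hx (fun i hi _ => htop i hi)
  rw [grd_succ h0 (by omega), hb]

lemma grd_add_top (h0 : W 0 = 1) (htop : ∀ i, i ≤ k → W i ≤ W k) (x : ℕ) :
    grd W k (x + W k) = grd W k x + 1 := by
  have h1 : 1 ≤ W k := by have := htop 0 (by omega); omega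
  rw [grd_top h0 htop (by omega)]
  simp

lemma bestCoin_lower {x : ℕ} (hx : x < W (k+1)) :
    bestCoin W (k+1) x = bestCoin W k x := by
  unfold bestCoin
  rw [Finset.range_add_one, Finset.filter_insert, if_neg (by omega)]

lemma grd_lower (h0 : W 0 = 1) : ∀ x, x < W (k+1) → grd W (k+1) x = grd W k x := by
  intro x
  induction x using Nat.strong_induction_on with
  | _ x ih =>
    intro hx
    rcases Nat.eq_zero_or_pos x with rfl | hpos
    · rw [grd_zero, grd_zero]
    · have hb := bestCoin_lower (W := W) (k := k) hx
      have h1 : 1 ≤ bestCoin W k x := one_le_bestCoin h0 hpos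
      have h2 : bestCoin W k x ≤ x := bestCoin_le_self
      rw [grd_succ h0 hpos, grd_succ h0 hpos, hb, ih (x - bestCoin W k x) (by omega) (by omega)]

lemma grd_peel (h0 : W 0 = 1) (htop : ∀ i, i ≤ k + 1 → W i ≤ W (k+1)) :
    ∀ m u, u < W (k+1) → grd W (k+1) (m * W (k+1) + u) = m + grd W k u := by
  intro m
  induction m with
  | zero => intro u hu; simpa using grd_lower h0 u hu
  | succ n ih =>
    intro u hu
    have : (n + 1) * W (k+1) + u = (n * W (k+1) + u) + W (k+1) := by ring
    rw [this, grd_add_top h0 htop, ih u hu]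
    omega

lemma grd_step_one (h0 : W 0 = 1) : ∀ x, grd W k (x + 1) ≤ grd W k x + 1 := by
  intro x
  induction x using Nat.strong_induction_on with
  | _ x ih =>
    have h1 : 1 ≤ bestCoin W k (x+1) := one_le_bestCoin h0 (by omega)
    have h2 : bestCoin W k (x+1) ≤ x + 1 := bestCoin_le_self
    by_cases hB : bestCoin W k (x+1) = x + 1
    · rw [grd_succ h0 (by omega), hB]
      simp [grd_zero]
    · have hBx : bestCoin W k (x+1) ≤ x := by omega
      obtain ⟨j, hj, hjeq, hjle⟩ := bestCoin_mem (W := W) (k := k) h0 (x := x + 1) (by omega)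
      have hbx : bestCoin W k x = bestCoin W k (x+1) := by
        apply le_antisymm
        · exact bestCoin_le' fun i hi hix => le_bestCoin hi (by omega)
        · rw [hjeq]; exact le_bestCoin hj (by omega)
      rcases Nat.eq_zero_or_pos x with rfl | hxpos
      · -- then bestCoin ≤ 0, contradiction with h1 via hBx
        omega
      · rw [grd_succ h0 (x := x + 1) (by omega), grd_succ h0 (x := x) hxpos, hbx]
        have hrw : x + 1 - bestCoin W k (x+1) = (x - bestCoin W k (x+1)) + 1 := by omega
        rw [hrw]
        have := ih (x - bestCoin W k (x+1)) (by omega)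
        omega

end FCP

namespace FCP

variable {W : ℕ → ℕ} {k : ℕ}

lemma sum_erase_add (x : Fin (k+1) → ℕ) (f : Fin (k+1) → ℕ) (j : Fin (k+1)) :
    ∑ i, x i * f i = x j * f j + ∑ i ∈ Finset.univ.erase j, x i * f i :=
  (Finset.add_sum_erase _ (fun i => x i * f i) (Finset.mem_univ j)).symm

lemma sum_update_mul (x : Fin (k+1) → ℕ) (j : Fin (k+1)) (v : ℕ) (f : Fin (k+1) → ℕ) :
    ∑ i, Function.update x j v i * f i = v * f j + ∑ i ∈ Finset.univ.erase j, x i * f i := by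
  classical
  rw [← Finset.add_sum_erase _ (fun i => Function.update x j v i * f i) (Finset.mem_univ j)]
  rw [Function.update_self]
  congr 1
  apply Finset.sum_congr rfl
  intro i hi
  rw [Function.update_of_ne (Finset.ne_of_mem_erase hi)]

lemma sum_update (x : Fin (k+1) → ℕ) (j : Fin (k+1)) (v : ℕ) :
    ∑ i, Function.update x j v i = v + ∑ i ∈ Finset.univ.erase j, x i := by
  classical
  rw [← Finset.add_sum_erase _ (Function.update x j v) (Finset.mem_univ j)]
  rw [Function.update_self]
  congr 1
  apply Finset.sum_congr rfl
  intro i hi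
  rw [Function.update_of_ne (Finset.ne_of_mem_erase hi)]

lemma sum_erase_add' (x : Fin (k+1) → ℕ) (j : Fin (k+1)) :
    ∑ i, x i = x j + ∑ i ∈ Finset.univ.erase j, x i :=
  (Finset.add_sum_erase _ x (Finset.mem_univ j)).symm

lemma opt_le_rep {N : ℕ} (x : Fin (k+1) → ℕ) (hx : (∑ i, x i * W i.1) = N) :
    opt W k N ≤ ∑ i, x i :=
  Nat.sInf_le ⟨x, rfl, hx⟩

lemma opt_nonempty (h0 : W 0 = 1) (N : ℕ) :
    {n | ∃ x : Fin (k + 1) → ℕ, (∑ i, x i) = n ∧ (∑ i, x i * W i.1) = N}.Nonempty := by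
  classical
  refine ⟨N, fun i => if i = 0 then N else 0, by simp, ?_⟩
  simp [h0]

lemma opt_spec (h0 : W 0 = 1) (N : ℕ) :
    ∃ x : Fin (k+1) → ℕ, (∑ i, x i) = opt W k N ∧ (∑ i, x i * W i.1) = N :=
  Nat.sInf_mem (opt_nonempty h0 N)

lemma grd_rep (h0 : W 0 = 1) :
    ∀ N, ∃ x : Fin (k+1) → ℕ, (∑ i, x i) = grd W k N ∧ (∑ i, x i * W i.1) = N := by
  classical
  intro N
  induction N using Nat.strong_induction_on with
  | _ N ih =>
    rcases Nat.eq_zero_or_pos N with rfl | hpos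
    · exact ⟨0, by simp [grd_zero]⟩
    · obtain ⟨j, hj, hjeq, hjle⟩ := bestCoin_mem (W := W) (k := k) h0 hpos
      have h1 : 1 ≤ W j := by rw [← hjeq]; exact one_le_bestCoin h0 hpos
      obtain ⟨x, hs, hv⟩ := ih (N - W j) (by omega)
      set jj : Fin (k+1) := ⟨j, by omega⟩ with hjj
      have hjj1 : (jj : ℕ) = j := rfl
      refine ⟨Function.update x jj (x jj + 1), ?_, ?_⟩
      · rw [sum_update]
        rw [grd_succ h0 hpos, hjeq, ← hs, sum_erase_add' x jj]
        omega
      · rw [sum_update_mul]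
        rw [sum_erase_add x (fun i => W i.1) jj] at hv
        simp only [hjj1] at *
        have hexp : (x jj + 1) * W j = x jj * W j + W j := by ring
        omega

lemma opt_le_grd (h0 : W 0 = 1) (N : ℕ) : opt W k N ≤ grd W k N := by
  obtain ⟨x, hs, hv⟩ := grd_rep (W := W) (k := k) h0 N
  rw [← hs]
  exact opt_le_rep x hv

lemma opt_add_coin (h0 : W 0 = 1) {j : ℕ} (hj : j ≤ k) (N : ℕ) :
    opt W k (N + W j) ≤ opt W k N + 1 := by
  classical
  obtain ⟨x, hs, hv⟩ := opt_spec (W := W) (k := k) h0 N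
  set jj : Fin (k+1) := ⟨j, by omega⟩ with hjj
  have hjj1 : (jj : ℕ) = j := rfl
  have key : (∑ i, Function.update x jj (x jj + 1) i * W i.1) = N + W j := by
    rw [sum_update_mul]
    rw [sum_erase_add x (fun i => W i.1) jj] at hv
    simp only [hjj1] at *
    have hexp : (x jj + 1) * W j = x jj * W j + W j := by ring
    omega
  have h2 := opt_le_rep (W := W) (k := k) _ key
  rw [sum_update] at h2
  rw [sum_erase_add' x jj] at hs
  omega

lemma opt_zero (h0 : W 0 = 1) : opt W k 0 = 0 := by
  have := opt_le_rep (W := W) (k := k) (N := 0) (fun _ => 0) (by simp)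
  simpa using this

lemma Orderly.grd_add_coin (h0 : W 0 = 1) (hord : Orderly W k) {j : ℕ} (hj : j ≤ k)
    (hWj : 1 ≤ W j) (x : ℕ) : grd W k (x + W j) ≤ grd W k x + 1 := by
  have h1 : grd W k (x + W j) = opt W k (x + W j) := (hord _ (by omega)).symm
  have h2 : opt W k x ≤ grd W k x := opt_le_grd h0 x
  have h3 := opt_add_coin (W := W) h0 hj x
  omega

lemma Orderly.grd_le_rep (hord : Orderly W k) {N : ℕ} (hN : 0 < N)
    (x : Fin (k+1) → ℕ) (hx : (∑ i, x i * W i.1) = N) : grd W k N ≤ ∑ i, x i := by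
  rw [← hord N hN]
  exact opt_le_rep x hx

lemma orderly_of_step (h0 : W 0 = 1)
    (hstep : ∀ x j, j ≤ k → grd W k (x + W j) ≤ grd W k x + 1) : Orderly W k := by
  classical
  have main : ∀ n (x : Fin (k+1) → ℕ), (∑ i, x i) = n → grd W k (∑ i, x i * W i.1) ≤ n := by
    intro n
    induction n with
    | zero =>
      intro x hx
      have hall := Finset.sum_eq_zero_iff.mp hx
      have hz : (∑ i, x i * W i.1) = 0 :=
        Finset.sum_eq_zero fun i hi => by rw [hall i hi]; ring
      rw [hz, grd_zero]
    | succ n ih =>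
      intro x hx
      have hne : ∃ j : Fin (k+1), x j ≠ 0 := by
        by_contra h
        push_neg at h
        have : (∑ i, x i) = 0 := Finset.sum_eq_zero fun i _ => h i
        omega
      obtain ⟨j, hjne⟩ := hne
      set x' := Function.update x j (x j - 1) with hx'
      have hs' : (∑ i, x' i) = n := by
        rw [hx', sum_update]
        rw [sum_erase_add' x j] at hx
        omega
      have hv' : (∑ i, x i * W i.1) = (∑ i, x' i * W i.1) + W j.1 := by
        rw [hx', sum_update_mul]
        rw [sum_erase_add x (fun i => W i.1) j]
        have : x j * W j.1 = (x j - 1) * W j.1 + W j.1 := by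
          cases' Nat.exists_eq_succ_of_ne_zero hjne with m hm
          rw [hm, Nat.succ_sub_one, Nat.succ_mul]
        omega
      rw [hv']
      have hst := hstep (∑ i, x' i * W i.1) j.1 (by omega)
      have hih := ih x' hs'
      omega
  intro c hc
  apply le_antisymm (opt_le_grd h0 c)
  obtain ⟨x, hs, hv⟩ := opt_spec (W := W) (k := k) h0 c
  have := main _ x rfl
  rw [hv, hs] at this
  exact this

end FCP

namespace FCP

def wf (a b c d : ℕ) : ℕ → ℕ := fun i => if i = 0 then 1 else if i = 1 then a
  else if i = 2 then b else if i = 3 then c else d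

section Specific

variable (a b c d : ℕ)

local notation "w" => wf a b c d

lemma w0 : w 0 = 1 := rfl
lemma w1 : w 1 = a := rfl
lemma w2 : w 2 = b := rfl
lemma w3 : w 3 = c := rfl
lemma w4 : w 4 = d := rfl

lemma wtop4 (h1 : 1 < a) (hab : a < b) (hbc : b < c) (hcd : c < d) :
    ∀ i, i ≤ 4 → w i ≤ w 4 := by
  intro i hi
  interval_cases i <;> simp [wf] <;> omega

lemma wtop3 (h1 : 1 < a) (hab : a < b) (hbc : b < c) :
    ∀ i, i ≤ 3 → w i ≤ w 3 := by
  intro i hi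
  interval_cases i <;> simp [wf] <;> omega

lemma wtop2 (h1 : 1 < a) (hab : a < b) :
    ∀ i, i ≤ 2 → w i ≤ w 2 := by
  intro i hi
  interval_cases i <;> simp [wf] <;> omega

lemma wtop1 (h1 : 1 < a) :
    ∀ i, i ≤ 1 → w i ≤ w 1 := by
  intro i hi
  interval_cases i <;> simp [wf] <;> omega

lemma wtop0 : ∀ i, i ≤ 0 → w i ≤ w 0 := by
  intro i hi
  interval_cases i
  simp

lemma g0_eval : ∀ x, grd w 0 x = x := by
  intro x
  induction x with
  | zero => exact grd_zero
  | succ n ih =>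
    have h := grd_top (W := w) (k := 0) rfl (wtop0 a b c d) (x := n + 1) (by simp [wf])
    simp only [w0, Nat.add_sub_cancel] at h
    rw [h, ih]

lemma g1_peel (h1 : 1 < a) : ∀ m u, u < a → grd w 1 (m * a + u) = m + u := by
  intro m u hu
  have h := grd_peel (W := w) (k := 0) rfl (wtop1 a b c d h1) m u (by rw [w1]; omega)
  rw [w1] at h
  rw [h, g0_eval]

lemma g1_small (h1 : 1 < a) : ∀ u, u < a → grd w 1 u = u := by
  intro u hu
  have h := g1_peel a b c d h1 0 u hu
  simpa using h

lemma g1_addtop (h1 : 1 < a) : ∀ x, grd w 1 (x + a) = grd w 1 x + 1 := by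
  intro x
  have h := grd_add_top (W := w) (k := 1) rfl (wtop1 a b c d h1) x
  rw [w1] at h
  omega

lemma g2_peel (h1 : 1 < a) (hab : a < b) :
    ∀ m u, u < b → grd w 2 (m * b + u) = m + grd w 1 u := by
  intro m u hu
  have h := grd_peel (W := w) (k := 1) rfl (wtop2 a b c d h1 hab) m u (by rw [w2]; omega)
  rw [w2] at h
  rw [h]

lemma g2_small (h1 : 1 < a) (hab : a < b) : ∀ u, u < b → grd w 2 u = grd w 1 u := by
  intro u hu
  have h := g2_peel a b c d h1 hab 0 u hu
  simpa using h

lemma g2_addtop (h1 : 1 < a) (hab : a < b) : ∀ x, grd w 2 (x + b) = grd w 2 x + 1 := by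
  intro x
  have h := grd_add_top (W := w) (k := 2) rfl (wtop2 a b c d h1 hab) x
  rw [w2] at h
  omega

lemma g3_peel (h1 : 1 < a) (hab : a < b) (hbc : b < c) :
    ∀ m u, u < c → grd w 3 (m * c + u) = m + grd w 2 u := by
  intro m u hu
  have h := grd_peel (W := w) (k := 2) rfl (wtop3 a b c d h1 hab hbc) m u (by rw [w3]; omega)
  rw [w3] at h
  rw [h]

lemma g3_small (h1 : 1 < a) (hab : a < b) (hbc : b < c) :
    ∀ u, u < c → grd w 3 u = grd w 2 u := by
  intro u hu
  have h := g3_peel a b c d h1 hab hbc 0 u hu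
  simpa using h

lemma g3_addtop (h1 : 1 < a) (hab : a < b) (hbc : b < c) :
    ∀ x, grd w 3 (x + c) = grd w 3 x + 1 := by
  intro x
  have h := grd_add_top (W := w) (k := 3) rfl (wtop3 a b c d h1 hab hbc) x
  rw [w3] at h
  omega

lemma g4_peel (h1 : 1 < a) (hab : a < b) (hbc : b < c) (hcd : c < d) :
    ∀ m u, u < d → grd w 4 (m * d + u) = m + grd w 3 u := by
  intro m u hu
  have h := grd_peel (W := w) (k := 3) rfl (wtop4 a b c d h1 hab hbc hcd) m u (by rw [w4]; omega)
  rw [w4] at h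
  rw [h]

lemma g4_small (h1 : 1 < a) (hab : a < b) (hbc : b < c) (hcd : c < d) :
    ∀ u, u < d → grd w 4 u = grd w 3 u := by
  intro u hu
  have h := g4_peel a b c d h1 hab hbc hcd 0 u hu
  simpa using h

lemma g4_addtop (h1 : 1 < a) (hab : a < b) (hbc : b < c) (hcd : c < d) :
    ∀ x, grd w 4 (x + d) = grd w 4 x + 1 := by
  intro x
  have h := grd_add_top (W := w) (k := 4) rfl (wtop4 a b c d h1 hab hbc hcd) x
  rw [w4] at h
  omega

lemma g1_le_one (h1 : 1 < a) : ∀ x, grd w 1 x ≤ 1 → x = 0 ∨ x = 1 ∨ x = a := by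
  intro x hx
  by_cases hxa : x < a
  · rw [g1_small a b c d h1 x hxa] at hx
    omega
  · have hx' : x = (x - a) + a := by omega
    rw [hx', g1_addtop a b c d h1] at hx
    have h : grd w 1 (x - a) = 0 := by omega
    rw [grd_eq_zero_iff (by rfl)] at h
    omega

lemma g2_le_one (h1 : 1 < a) (hab : a < b) :
    ∀ x, grd w 2 x ≤ 1 → x = 0 ∨ x = 1 ∨ x = a ∨ x = b := by
  intro x hx
  by_cases hxb : x < b
  · rw [g2_small a b c d h1 hab x hxb] at hx
    have := g1_le_one a b c d h1 x hx
    omega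
  · have hx' : x = (x - b) + b := by omega
    rw [hx', g2_addtop a b c d h1 hab] at hx
    have h : grd w 2 (x - b) = 0 := by omega
    rw [grd_eq_zero_iff (by rfl)] at h
    omega

-- ### criterion instantiations

lemma step2a (h1 : 1 < a) (hab : a < b)
    (hal : ∀ v, v < b → b ≤ v + a → grd w 1 (v + a - b) ≤ grd w 1 v) :
    ∀ y, grd w 2 (y + a) ≤ grd w 2 y + 1 := by
  intro y
  have hb1 : 0 < b := by omega
  have hy : y = y / b * b + y % b := (Nat.div_add_mod' y b).symm
  set m := y / b
  set v := y % b
  have hv : v < b := Nat.mod_lt _ hb1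
  by_cases hcase : v + a < b
  · have e1 : y + a = m * b + (v + a) := by omega
    rw [e1, g2_peel a b c d h1 hab m (v + a) hcase, hy,
      g2_peel a b c d h1 hab m v hv, g1_addtop a b c d h1]
    omega
  · have e1 : y + a = (m + 1) * b + (v + a - b) := by
      have : (m + 1) * b = m * b + b := by ring
      omega
    rw [e1, g2_peel a b c d h1 hab (m+1) (v + a - b) (by omega), hy,
      g2_peel a b c d h1 hab m v hv]
    have := hal v hv (by omega)
    omega

lemma orderly0 : Orderly w 0 := by
  apply orderly_of_step rfl
  intro x j hj
  interval_cases j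
  exact grd_step_one (W := w) (k := 0) rfl x

lemma orderly1 (h1 : 1 < a) : Orderly w 1 := by
  apply orderly_of_step rfl
  intro x j hj
  interval_cases j
  · exact grd_step_one (W := w) (k := 1) rfl x
  · show grd w 1 (x + a) ≤ grd w 1 x + 1
    rw [g1_addtop a b c d h1]

lemma suf3 (h1 : 1 < a) (hab : a < b)
    (hal : ∀ v, v < b → b ≤ v + a → grd w 1 (v + a - b) ≤ grd w 1 v) :
    Orderly w 2 := by
  apply orderly_of_step rfl
  intro x j hj
  interval_cases j
  · exact grd_step_one (W := w) (k := 2) rfl x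
  · exact step2a a b c d h1 hab hal x
  · show grd w 2 (x + b) ≤ grd w 2 x + 1
    rw [g2_addtop a b c d h1 hab]

lemma suf4 (h1 : 1 < a) (hab : a < b) (hbc : b < c)
    (hal : ∀ v, v < b → b ≤ v + a → grd w 1 (v + a - b) ≤ grd w 1 v)
    (hba : ∀ v, v < c → c ≤ v + a → grd w 2 (v + a - c) ≤ grd w 2 v)
    (hbb : ∀ v, v < c → c ≤ v + b → grd w 2 (v + b - c) ≤ grd w 2 v) :
    Orderly w 3 := by
  have hc1 : 0 < c := by omega
  have main : ∀ e, 0 < e → e ≤ b →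
      (∀ v, v < c → c ≤ v + e → grd w 2 (v + e - c) ≤ grd w 2 v) →
      (∀ v, grd w 2 (v + e) ≤ grd w 2 v + 1) →
      ∀ y, grd w 3 (y + e) ≤ grd w 3 y + 1 := by
    intro e he0 heb hcross hstep y
    have hy : y = y / c * c + y % c := (Nat.div_add_mod' y c).symm
    set m := y / c
    set v := y % c
    have hv : v < c := Nat.mod_lt _ hc1
    by_cases hcase : v + e < c
    · have e1 : y + e = m * c + (v + e) := by omega
      rw [e1, g3_peel a b c d h1 hab hbc m (v + e) hcase, hy,
        g3_peel a b c d h1 hab hbc m v hv]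
      have := hstep v
      omega
    · have e1 : y + e = (m + 1) * c + (v + e - c) := by
        have : (m + 1) * c = m * c + c := by ring
        omega
      rw [e1, g3_peel a b c d h1 hab hbc (m+1) (v + e - c) (by omega), hy,
        g3_peel a b c d h1 hab hbc m v hv]
      have := hcross v hv (by omega)
      omega
  apply orderly_of_step rfl
  intro x j hj
  interval_cases j
  · exact grd_step_one (W := w) (k := 3) rfl x
  · exact main a (by omega) (by omega) hba (step2a a b c d h1 hab hal) x
  · refine main b (by omega) le_rfl hbb (fun v => ?_) x
    rw [g2_addtop a b c d h1 hab]
  · show grd w 3 (x + c) ≤ grd w 3 x + 1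
    rw [g3_addtop a b c d h1 hab hbc]

-- ### extraction helpers

lemma H4 (h1 : 1 < a) (hab : a < b) (hbc : b < c) (hcd : c < d) (hord : Orderly w 4) :
    (∀ x, grd w 4 (x + a) ≤ grd w 4 x + 1) ∧ (∀ x, grd w 4 (x + b) ≤ grd w 4 x + 1) ∧
      (∀ x, grd w 4 (x + c) ≤ grd w 4 x + 1) := by
  refine ⟨fun x => ?_, fun x => ?_, fun x => ?_⟩
  · exact Orderly.grd_add_coin rfl hord (j := 1) (by omega) (by show 1 ≤ a; omega) x
  · exact Orderly.grd_add_coin rfl hord (j := 2) (by omega) (by show 1 ≤ b; omega) x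
  · exact Orderly.grd_add_coin rfl hord (j := 3) (by omega) (by show 1 ≤ c; omega) x

lemma H3 (h1 : 1 < a) (hab : a < b) (hbc : b < c) (hord : Orderly w 3) :
    (∀ x, grd w 3 (x + a) ≤ grd w 3 x + 1) ∧ (∀ x, grd w 3 (x + b) ≤ grd w 3 x + 1) := by
  constructor <;> intro x
  · exact Orderly.grd_add_coin rfl hord (j := 1) (by omega) (by show 1 ≤ a; omega) x
  · exact Orderly.grd_add_coin rfl hord (j := 2) (by omega) (by show 1 ≤ b; omega) x

lemma rep5 (hord : Orderly w 4) (x0 x1 x2 x3 x4 N : ℕ) (hN : 0 < N)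
    (hval : x0 + x1 * a + x2 * b + x3 * c + x4 * d = N) :
    grd w 4 N ≤ x0 + x1 + x2 + x3 + x4 := by
  have h := Orderly.grd_le_rep hord hN ![x0, x1, x2, x3, x4] ?_
  · simpa [Fin.sum_univ_five] using h
  · show _ = N
    rw [Fin.sum_univ_five]
    simp [wf, show ((0:Fin 5):ℕ) = 0 from rfl, show ((1:Fin 5):ℕ) = 1 from rfl,
      show ((2:Fin 5):ℕ) = 2 from rfl, show ((3:Fin 5):ℕ) = 3 from rfl,
      show ((4:Fin 5):ℕ) = 4 from rfl]
    linarith [hval]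

lemma rep4 (hord : Orderly w 3) (x0 x1 x2 x3 N : ℕ) (hN : 0 < N)
    (hval : x0 + x1 * a + x2 * b + x3 * c = N) :
    grd w 3 N ≤ x0 + x1 + x2 + x3 := by
  have h := Orderly.grd_le_rep hord hN ![x0, x1, x2, x3] ?_
  · simpa [Fin.sum_univ_four] using h
  · show _ = N
    rw [Fin.sum_univ_four]
    simp [wf, show ((0:Fin 4):ℕ) = 0 from rfl, show ((1:Fin 4):ℕ) = 1 from rfl,
      show ((2:Fin 4):ℕ) = 2 from rfl, show ((3:Fin 4):ℕ) = 3 from rfl]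
    linarith [hval]

-- ### structure of a non-orderly 3-coin prefix

lemma divmod_pos (x y : ℕ) (hy : 0 < y) (hxy : y ≤ x) :
    ∃ q r, x = (q + 1) * y + r ∧ r < y := by
  obtain ⟨q, r, hb, hr⟩ : ∃ q r, x = q * y + r ∧ r < y :=
    ⟨x / y, x % y, (Nat.div_add_mod' x y).symm, Nat.mod_lt _ hy⟩
  rcases q with _ | q2
  · exfalso
    simp at hb
    omega
  · exact ⟨q2, r, hb, hr⟩

lemma bad3_struct (h1 : 1 < a) (hab : a < b) (hno : ¬ Orderly w 2) :
    ∃ q' r, b = (q' + 1) * a + r ∧ 1 ≤ r ∧ q' + 1 + r < a := by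
  obtain ⟨q', r, hb, hr⟩ := divmod_pos b a (by omega) (by omega)
  have hexp : (q' + 1) * a = q' * a + a := by ring
  by_contra hcon
  push_neg at hcon
  have hdisj : r = 0 ∨ a ≤ q' + 1 + r := by
    by_cases hr0 : r = 0
    · left; exact hr0
    · right; exact hcon q' r hb (by omega)
  apply hno
  apply suf3 a b c d h1 hab
  intro v hv hvab
  set wv := v + a - b with hwv
  have hwva : wv < a := by omega
  rw [g1_small a b c d h1 wv hwva]
  by_cases hcase : r + wv < a
  · have hv' : v = q' * a + (r + wv) := by omega
    rw [hv', g1_peel a b c d h1 _ _ hcase]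
    omega
  · have hr1 : 1 ≤ r := by omega
    have hqr : a ≤ q' + 1 + r := by
      rcases hdisj with h | h
      · omega
      · exact h
    have hv' : v = (q' + 1) * a + (r + wv - a) := by omega
    rw [hv', g1_peel a b c d h1 _ _ (by omega)]
    omega

-- ### T4 : 4-coin orderly implies 3-coin prefix orderly

lemma ord3_ord2 (h1 : 1 < a) (hab : a < b) (hbc : b < c) (hO3 : Orderly w 3) :
    Orderly w 2 := by
  by_contra hno
  obtain ⟨q', r, hb, hr1, hqa⟩ := bad3_struct a b c d h1 hab hno
  have ha3 : 3 ≤ a := by omega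
  have hexp1 : (q' + 1) * a = q' * a + a := by ring
  have hexp2 : (q' + 2) * a = q' * a + a + a := by ring
  by_cases hK1 : a + b < c + r
  · -- case s > a - r : witness N = b + (a - r)
    set N := b + (a - r) with hN
    have hgr : grd w 3 N = 1 + (a - r) := by
      rw [g3_small a b c d h1 hab hbc N (by omega),
        show N = 1 * b + (a - r) by omega,
        g2_peel a b c d h1 hab 1 (a - r) (by omega),
        g1_small a b c d h1 (a - r) (by omega)]
    have hrep := rep4 a b c d hO3 0 (q' + 2) 0 0 N (by omega)
      (by omega)
    omega
  by_cases hK2 : c + 2 ≤ b + a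
  · -- case s ≤ a - 2 : witness N = c + (a-1)
    set N := c + (a - 1) with hN
    have hgr : grd w 3 N = 1 + (a - 1) := by
      rw [show N = 1 * c + (a - 1) by omega,
        g3_peel a b c d h1 hab hbc 1 (a - 1) (by omega),
        g2_small a b c d h1 hab (a - 1) (by omega),
        g1_small a b c d h1 (a - 1) (by omega)]
    have hrep := rep4 a b c d hO3 (c - b - 1) 1 1 0 N (by omega) (by omega)
    omega
  · -- remaining case : r = 1 and c = b + a - 1, witness N = 2b
    have hr : r = 1 := by omega
    have hc : c = b + a - 1 := by omega
    have hgr : grd w 3 (2 * b) = q' + 3 := by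
      rw [show 2 * b = 1 * c + (b + 1 - a) by omega,
        g3_peel a b c d h1 hab hbc 1 (b + 1 - a) (by omega),
        g2_small a b c d h1 hab (b + 1 - a) (by omega),
        show b + 1 - a = q' * a + 2 by omega,
        g1_peel a b c d h1 q' 2 (by omega)]
      omega
    have hrep := rep4 a b c d hO3 0 0 2 0 (2 * b) (by omega) (by omega)
    omega

-- ### necessary conditions from a 5-coin orderly currency

section Nec

variable (h1 : 1 < a) (hab : a < b) (hbc : b < c) (hcd : c < d) (hO5 : Orderly (wf a b c d) 4)

include h1 hab hbc hcd hO5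

lemma gc1 : grd w 3 c = 1 := by
  have h := g3_peel a b c d h1 hab hbc 1 0 (by omega)
  rw [grd_zero] at h
  simpa using h

lemma NC2 : ∀ x, x < c → grd w 3 x ≤ grd w 3 (d - c + x) := by
  intro x hx
  have h := (H4 a b c d h1 hab hbc hcd hO5).2.2 (d - c + x)
  have e1 : d - c + x + c = 1 * d + x := by omega
  rw [e1, g4_peel a b c d h1 hab hbc hcd 1 x (by omega),
    g4_small a b c d h1 hab hbc hcd (d - c + x) (by omega)] at h
  omega

lemma NB2 : ∀ x, x < b → grd w 2 x ≤ grd w 4 (d - b + x) := by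
  intro x hx
  have h := (H4 a b c d h1 hab hbc hcd hO5).2.1 (d - b + x)
  have e1 : d - b + x + b = 1 * d + x := by omega
  rw [e1, g4_peel a b c d h1 hab hbc hcd 1 x (by omega),
    g3_small a b c d h1 hab hbc x (by omega),
    g2_small a b c d h1 hab x hx] at h
  have h2 : grd w 2 x = grd w 1 x := g2_small a b c d h1 hab x hx
  omega

lemma Nba : ∀ v, v < c → c ≤ v + a → v + a < d → grd w 2 (v + a - c) ≤ grd w 2 v := by
  intro v hv hvc hvd
  have h := (H4 a b c d h1 hab hbc hcd hO5).1 v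
  have e1 : v + a = 1 * c + (v + a - c) := by omega
  rw [g4_small a b c d h1 hab hbc hcd (v + a) hvd, e1,
    g3_peel a b c d h1 hab hbc 1 (v + a - c) (by omega),
    g4_small a b c d h1 hab hbc hcd v (by omega),
    g3_small a b c d h1 hab hbc v hv] at h
  omega

lemma Nbb : ∀ v, v < c → c ≤ v + b → v + b < d → grd w 2 (v + b - c) ≤ grd w 2 v := by
  intro v hv hvc hvd
  have h := (H4 a b c d h1 hab hbc hcd hO5).2.1 v
  have e1 : v + b = 1 * c + (v + b - c) := by omega
  rw [g4_small a b c d h1 hab hbc hcd (v + b) hvd, e1,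
    g3_peel a b c d h1 hab hbc 1 (v + b - c) (by omega),
    g4_small a b c d h1 hab hbc hcd v (by omega),
    g3_small a b c d h1 hab hbc v hv] at h
  omega

lemma Nal : ∀ v, v < b → b ≤ v + a → v + a < c → grd w 1 (v + a - b) ≤ grd w 1 v := by
  intro v hv hvb hvc
  have h := (H4 a b c d h1 hab hbc hcd hO5).1 v
  have e1 : v + a = 1 * b + (v + a - b) := by omega
  rw [g4_small a b c d h1 hab hbc hcd (v + a) (by omega),
    g3_small a b c d h1 hab hbc (v + a) hvc, e1,
    g2_peel a b c d h1 hab 1 (v + a - b) (by omega),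
    g4_small a b c d h1 hab hbc hcd v (by omega),
    g3_small a b c d h1 hab hbc v (by omega),
    g2_small a b c d h1 hab v hv] at h
  omega

lemma F1' : a ≤ (d - c) + 1 := by
  by_contra hcon
  push_neg at hcon
  have ht1 : 1 ≤ d - c := by omega
  have h := NC2 a b c d h1 hab hbc hcd hO5 (a - (d - c)) (by omega)
  rw [show d - c + (a - (d - c)) = a by omega] at h
  have e2 : grd w 3 a = 1 := by
    have h' := g1_peel a b c d h1 1 0 (by omega)
    rw [g3_small a b c d h1 hab hbc a (by omega),
      g2_small a b c d h1 hab a (by omega)]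
    simpa using h'
  rw [e2, g3_small a b c d h1 hab hbc _ (by omega),
    g2_small a b c d h1 hab _ (by omega),
    g1_small a b c d h1 _ (by omega)] at h
  omega

-- βa condition holds in full under a 5-coin orderly currency
lemma beta_a : ∀ v, v < c → c ≤ v + a → grd w 2 (v + a - c) ≤ grd w 2 v := by
  by_contra hcon
  push_neg at hcon
  obtain ⟨v, hv, hvc, hgt⟩ := hcon
  have hvd : d ≤ v + a := by
    by_contra hvd
    push_neg at hvd
    exact absurd (Nba a b c d h1 hab hbc hcd hO5 v hv hvc hvd) (by omega)
  have hF := F1' a b c d h1 hab hbc hcd hO5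
  have htle : d - c ≤ a - 1 := by omega
  have hda : d = c + (a - 1) := by omega
  have hvc1 : v = c - 1 := by omega
  -- failure : grd2 (a-1) > grd2 (c-1)
  have hga1 : grd w 2 (a - 1) = a - 1 := by
    rw [g2_small a b c d h1 hab _ (by omega), g1_small a b c d h1 _ (by omega)]
  rw [show v + a - c = a - 1 by omega, hga1] at hgt
  -- NC2 at x = c - (a-1)
  have h2 := NC2 a b c d h1 hab hbc hcd hO5 (c - (a - 1)) (by omega)
  rw [show d - c + (c - (a - 1)) = c by omega, gc1 a b c d h1 hab hbc hcd hO5,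
    g3_small a b c d h1 hab hbc _ (by omega)] at h2
  have hopts := g2_le_one a b c d h1 hab _ h2
  have hcb : c - (a - 1) = a ∨ c - (a - 1) = b := by omega
  rcases hcb with hca | hcb
  · -- c = 2a - 1 : kill with NB2 at x = b - a + 1
    have hc : c = 2 * a - 1 := by omega
    have h3 := NB2 a b c d h1 hab hbc hcd hO5 (b - a + 1) (by omega)
    rw [show d - b + (b - a + 1) = c by omega,
      g4_small a b c d h1 hab hbc hcd c (by omega), gc1 a b c d h1 hab hbc hcd hO5,
      g2_small a b c d h1 hab _ (by omega),
      g1_small a b c d h1 _ (by omega)] at h3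
    omega
  · -- c = a + b - 1 : then grd2 (c-1) = a - 1, contradiction with hgt
    have hc : c = a + b - 1 := by omega
    have hval : grd w 2 (c - 1) = a - 1 := by
      rw [show c - 1 = 1 * b + (a - 2) by omega,
        g2_peel a b c d h1 hab 1 (a - 2) (by omega),
        g1_small a b c d h1 _ (by omega)]
      omega
    rw [hvc1] at hgt
    omega

end Nec

-- ### HL1 : 5-coin orderly implies 3-coin prefix orderly

lemma ord4_ord2 (h1 : 1 < a) (hab : a < b) (hbc : b < c) (hcd : c < d)
    (hO5 : Orderly w 4) : Orderly w 2 := by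
  by_contra hno
  obtain ⟨q', r, hb, hr1, hqa⟩ := bad3_struct a b c d h1 hab hno
  have ha3 : 3 ≤ a := by omega
  have hexp1 : (q' + 1) * a = q' * a + a := by ring
  have hexp2 : (q' + 2) * a = q' * a + a + a := by ring
  -- Step 1 : c ≤ b + a - r
  have hstep1 : c ≤ b + a - r := by
    by_contra hcon
    push_neg at hcon
    have h := Nal a b c d h1 hab hbc hcd hO5 (b - r) (by omega) (by omega) (by omega)
    rw [show b - r + a - b = a - r by omega,
      g1_small a b c d h1 (a - r) (by omega),
      show b - r = (q' + 1) * a + 0 by omega,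
      g1_peel a b c d h1 (q' + 1) 0 (by omega)] at h
    omega
  -- Step 2 : r = 1 and c = b + a - 1
  have hs1 : 1 ≤ c - b := by omega
  have hstep2 : r = 1 ∧ c = b + a - 1 := by
    have h := beta_a a b c d h1 hab hbc hcd hO5 (c - 1) (by omega) (by omega)
    rw [show c - 1 + a - c = a - 1 by omega,
      g2_small a b c d h1 hab (a - 1) (by omega),
      g1_small a b c d h1 (a - 1) (by omega),
      show c - 1 = 1 * b + (c - b - 1) by omega,
      g2_peel a b c d h1 hab 1 (c - b - 1) (by omega),
      g1_small a b c d h1 (c - b - 1) (by omega)] at h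
    omega
  obtain ⟨hr, hc⟩ := hstep2
  by_cases hd2b : 2 * b < d
  · -- kill : amount d + 2b
    have hval : grd w 4 (d + 2 * b) = q' + 4 := by
      rw [show d + 2 * b = 2 * b + d by ring,
        g4_addtop a b c d h1 hab hbc hcd,
        g4_small a b c d h1 hab hbc hcd _ (by omega),
        show 2 * b = 1 * c + (b + 1 - a) by omega,
        g3_peel a b c d h1 hab hbc 1 _ (by omega),
        g2_small a b c d h1 hab _ (by omega),
        show b + 1 - a = q' * a + 2 by omega,
        g1_peel a b c d h1 q' 2 (by omega)]
      omega
    have hrep := rep5 a b c d hO5 0 0 2 0 1 (d + 2 * b) (by omega) (by omega)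
    omega
  · -- d ≤ 2b so t := d - c < b
    push_neg at hd2b
    have ht1 : 1 ≤ d - c := by omega
    have htb : d - c < b := by omega
    -- NB2 at x = b - t gives b - t ∈ {1, a}
    have h := NB2 a b c d h1 hab hbc hcd hO5 (b - (d - c)) (by omega)
    rw [show d - b + (b - (d - c)) = c by omega,
      g4_small a b c d h1 hab hbc hcd c (by omega), gc1 a b c d h1 hab hbc hcd hO5] at h
    have hcases := g2_le_one a b c d h1 hab _ h
    have hbt : b - (d - c) = 1 ∨ b - (d - c) = a := by omega
    rcases hbt with hbt | hbt
    · -- t = b - 1 is impossible here since t ≤ b + 1 - a and a ≥ 3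
      omega
    · -- t = b - a, d = c + b - a : kill with NC2 at x = 2a - 1
      have h2 := NC2 a b c d h1 hab hbc hcd hO5 (2 * a - 1) (by omega)
      rw [show d - c + (2 * a - 1) = c by omega, gc1 a b c d h1 hab hbc hcd hO5] at h2
      rcases Nat.eq_zero_or_pos q' with hq0 | hq0
      · -- b = a + 1
        have hq'a : q' * a = 0 := by rw [hq0]; ring
        rw [g3_small a b c d h1 hab hbc _ (by omega),
          show 2 * a - 1 = 1 * b + (a - 2) by omega,
          g2_peel a b c d h1 hab 1 _ (by omega),
          g1_small a b c d h1 _ (by omega)] at h2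
        omega
      · -- 2a - 1 < b
        have haq : a ≤ q' * a := Nat.le_mul_of_pos_left a hq0
        rw [g3_small a b c d h1 hab hbc _ (by omega),
          g2_small a b c d h1 hab _ (by omega),
          show 2 * a - 1 = 1 * a + (a - 1) by omega,
          g1_peel a b c d h1 1 _ (by omega)] at h2
        omega

-- ### T5 : 5-coin orderly with non-orderly 4-coin prefix is the special family

lemma hgb2 (h1 : 1 < a) (hab : a < b) : grd w 2 b = 1 := by
  have h := g2_peel a b c d h1 hab 1 0 (by omega)
  rw [grd_zero] at h
  simpa using h

lemma T5 (h1 : 1 < a) (hab : a < b) (hbc : b < c) (hcd : c < d)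
    (hO5 : Orderly w 4) (hNO4 : ¬ Orderly w 3) :
    a = 2 ∧ c = b + 1 ∧ d = 2 * b ∧ 4 ≤ b := by
  have hO3 : Orderly w 2 := ord4_ord2 a b c d h1 hab hbc hcd hO5
  have hal : ∀ v, v < b → b ≤ v + a → grd w 1 (v + a - b) ≤ grd w 1 v := by
    intro v hv hvb
    have h : grd w 2 (v + a) ≤ grd w 2 v + 1 :=
      Orderly.grd_add_coin rfl hO3 (j := 1) (by omega) (by show 1 ≤ a; omega) v
    rw [show v + a = 1 * b + (v + a - b) by omega,
      g2_peel a b c d h1 hab 1 _ (by omega),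
      g2_small a b c d h1 hab v hv] at h
    omega
  have hba := beta_a a b c d h1 hab hbc hcd hO5
  have hfail : ∃ v, v < c ∧ c ≤ v + b ∧ grd w 2 v < grd w 2 (v + b - c) := by
    by_contra hcon
    push_neg at hcon
    exact hNO4 (suf4 a b c d h1 hab hbc hal
      (fun v hv hvc => hba v hv hvc)
      (fun v hv hvc => hcon v hv hvc))
  obtain ⟨v, hv, hvcb, hgt⟩ := hfail
  have hvd : d ≤ v + b := by
    by_contra h'
    push_neg at h'
    exact absurd (Nbb a b c d h1 hab hbc hcd hO5 v hv hvcb h') (by omega)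
  have htcb : d < c + b := by omega
  have ht1 : 1 ≤ d - c := by omega
  have htb : d - c < b := by omega
  have hF := F1' a b c d h1 hab hbc hcd hO5
  -- t ∈ {b-1, b-a} via NB2 at b - t
  have h := NB2 a b c d h1 hab hbc hcd hO5 (b - (d - c)) (by omega)
  rw [show d - b + (b - (d - c)) = c by omega,
    g4_small a b c d h1 hab hbc hcd c (by omega), gc1 a b c d h1 hab hbc hcd hO5] at h
  have hcases := g2_le_one a b c d h1 hab _ h
  have hbt : b - (d - c) = 1 ∨ b - (d - c) = a := by omega
  rcases hbt with hbt | hbt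
  · -- case t = b - 1, i.e. d = c + b - 1
    have hd : d + 1 = c + b := by omega
    have h2 := NC2 a b c d h1 hab hbc hcd hO5 (c - (d - c)) (by omega)
    rw [show d - c + (c - (d - c)) = c by omega, gc1 a b c d h1 hab hbc hcd hO5,
      show c - (d - c) = c - b + 1 by omega,
      g3_small a b c d h1 hab hbc _ (by omega)] at h2
    have hopts := g2_le_one a b c d h1 hab _ h2
    have hsab : c - b + 1 = a ∨ c - b + 1 = b := by omega
    rcases hsab with hsa | hsb
    swap
    · -- c = 2b - 1 : contradiction from the failure point v = 2b - 2
      have hv2 : v = 2 * b - 2 := by omega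
      rw [hv2, show 2 * b - 2 + b - c = b - 1 by omega,
        show (2 * b - 2 : ℕ) = 1 * b + (b - 2) by omega,
        g2_peel a b c d h1 hab 1 _ (by omega),
        g2_small a b c d h1 hab _ (by omega)] at hgt
      have hstep := grd_step_one (W := w) (k := 1) rfl (b - 2)
      rw [show b - 2 + 1 = b - 1 by omega] at hstep
      omega
    · -- c = b + a - 1
      have hc : c = b + a - 1 := by omega
      by_cases ha2 : a = 2
      · refine ⟨ha2, by omega, by omega, ?_⟩
        -- b ≥ 4
        by_contra hb4
        push_neg at hb4
        have hb3 : b = 3 := by omega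
        have hveq : v = 3 := by omega
        have hc4 : c = 4 := by omega
        rw [hveq, show (3 : ℕ) + b - c = 2 by omega] at hgt
        have e1 : grd w 2 3 = 1 := by
          rw [show (3:ℕ) = b by omega]
          exact hgb2 a b c d h1 hab
        have e2 : grd w 2 2 = 1 := by
          have h' := g1_peel a b c d h1 1 0 (by omega)
          rw [g2_small a b c d h1 hab 2 (by omega), show (2:ℕ) = 1 * a + 0 by omega]
          omega
        omega
      · -- a ≥ 3 : derive a contradiction
        have ha3 : 3 ≤ a := by omega
        obtain ⟨Q, R, hbQ, hR⟩ := divmod_pos b a (by omega) (by omega)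
        have hexpQ : (Q + 1) * a = Q * a + a := by ring
        have h3 := Nbb a b c d h1 hab hbc hcd hO5 b (by omega) (by omega) (by omega)
        rw [show b + b - c = Q * a + (R + 1) by omega,
          hgb2 a b c d h1 hab] at h3
        by_cases hRa : R + 1 < a
        · rw [g2_small a b c d h1 hab _ (by omega),
            g1_peel a b c d h1 Q (R + 1) hRa] at h3
          have hQ0 : Q = 0 := by omega
          have : Q * a = 0 := by rw [hQ0]; ring
          omega
        · -- R = a - 1, so b - a + 1 = (Q+1) a
          have hexpQ2 : (Q + 1) * a = Q * a + a := by ring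
          rw [show Q * a + (R + 1) = (Q + 1) * a + 0 by omega,
            g2_small a b c d h1 hab _ (by omega),
            g1_peel a b c d h1 (Q + 1) 0 (by omega)] at h3
          have hQ0 : Q = 0 := by omega
          have hQa : Q * a = 0 := by rw [hQ0]; ring
          have hb2a : b = 2 * a - 1 := by omega
          have hveq : v = 3 * a - 3 := by omega
          rw [hveq, show 3 * a - 3 + b - c = 2 * a - 2 by omega,
            show (3 * a - 3 : ℕ) = 1 * b + (a - 2) by omega,
            g2_peel a b c d h1 hab 1 _ (by omega),
            g1_small a b c d h1 _ (by omega),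
            g2_small a b c d h1 hab _ (by omega),
            show (2 * a - 2 : ℕ) = 1 * a + (a - 2) by omega,
            g1_peel a b c d h1 1 _ (by omega)] at hgt
          omega
  · -- case t = b - a, i.e. d + a = c + b
    have hd : d + a = c + b := by omega
    have h2 := NC2 a b c d h1 hab hbc hcd hO5 (c - (d - c)) (by omega)
    rw [show d - c + (c - (d - c)) = c by omega, gc1 a b c d h1 hab hbc hcd hO5,
      show c - (d - c) = c - b + a by omega,
      g3_small a b c d h1 hab hbc _ (by omega)] at h2
    have hopts := g2_le_one a b c d h1 hab _ h2
    have hcb : c + a = 2 * b := by omega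
    by_cases hm : c + a ≤ v + b
    · -- v + b - c ≥ a
      have e1 := g1_addtop a b c d h1 (v + b - c - a)
      rw [show v + b - c - a + a = v + b - c by omega] at e1
      have e2 := g2_peel a b c d h1 hab 1 (v + b - c - a) (by omega)
      rw [show 1 * b + (v + b - c - a) = v by omega] at e2
      rw [g2_small a b c d h1 hab (v + b - c) (by omega)] at hgt
      omega
    · -- v + b - c < a forces b = 2a - 1
      have hb2a : b = 2 * a - 1 := by omega
      have hma : v + b - c = a - 1 := by omega
      have hveq : v = b - 1 := by omega
      rw [hma, hveq, show (b - 1 : ℕ) = 1 * a + (a - 2) by omega,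
        g2_small a b c d h1 hab _ (by omega),
        g1_peel a b c d h1 1 _ (by omega),
        g2_small a b c d h1 hab _ (by omega),
        g1_small a b c d h1 _ (by omega)] at hgt
      omega

-- ### lifting step conditions through the top coin

lemma lift4 (h1 : 1 < a) (hab : a < b) (hbc : b < c) (hcd : c < d)
    (e : ℕ) (he0 : 0 < e) (hed : e < d)
    (hcross : ∀ v, v < d → d ≤ v + e → grd w 3 (v + e - d) ≤ grd w 3 v)
    (hstep : ∀ v, v + e < d → grd w 3 (v + e) ≤ grd w 3 v + 1) :
    ∀ y, grd w 4 (y + e) ≤ grd w 4 y + 1 := by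
  intro y
  have hd1 : 0 < d := by omega
  have hy : y = y / d * d + y % d := (Nat.div_add_mod' y d).symm
  set m := y / d
  set v := y % d
  have hv : v < d := Nat.mod_lt _ hd1
  by_cases hcase : v + e < d
  · have e1 : y + e = m * d + (v + e) := by omega
    rw [e1, g4_peel a b c d h1 hab hbc hcd m (v + e) hcase, hy,
      g4_peel a b c d h1 hab hbc hcd m v hv]
    have := hstep v hcase
    omega
  · have e1 : y + e = (m + 1) * d + (v + e - d) := by
      have : (m + 1) * d = m * d + d := by ring
      omega
    rw [e1, g4_peel a b c d h1 hab hbc hcd (m+1) (v + e - d) (by omega), hy,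
      g4_peel a b c d h1 hab hbc hcd m v hv]
    have := hcross v hv (by omega)
    omega

end Specific

-- ### T6 : the special family (1, 2, s, s+1, 2s), s ≥ 4, is orderly

section SpecialFamily

variable (s : ℕ) (hs : 4 ≤ s)

local notation "u" => wf 2 s (s+1) (2*s)

include hs

lemma sp_g1 : ∀ y, grd u 1 y = y / 2 + y % 2 := by
  intro y
  have h := g1_peel 2 s (s+1) (2*s) (by omega) (y / 2) (y % 2) (by omega)
  rw [show y / 2 * 2 + y % 2 = y by omega] at h
  exact h

lemma sp3a : ∀ v, v < s → grd u 3 v = v / 2 + v % 2 := by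
  intro v hv
  rw [g3_small 2 s (s+1) (2*s) (by omega) (by omega) (by omega) v (by omega),
    g2_small 2 s (s+1) (2*s) (by omega) (by omega) v (by omega),
    sp_g1 s hs]

lemma sp3b : grd u 3 s = 1 := by
  rw [g3_small 2 s (s+1) (2*s) (by omega) (by omega) (by omega) s (by omega)]
  exact hgb2 2 s (s+1) (2*s) (by omega) (by omega)

lemma sp3c : ∀ v, s + 1 ≤ v → v ≤ 2 * s → grd u 3 v = 1 + ((v - s - 1) / 2 + (v - s - 1) % 2) := by
  intro v hv1 hv2
  have h := g3_peel 2 s (s+1) (2*s) (by omega) (by omega) (by omega) 1 (v - s - 1) (by omega)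
  rw [show 1 * (s + 1) + (v - s - 1) = v by omega,
    g2_small 2 s (s+1) (2*s) (by omega) (by omega) (v - s - 1) (by omega),
    sp_g1 s hs] at h
  omega

lemma special_orderly : Orderly u 4 := by
  have h1 : (1:ℕ) < 2 := by omega
  have hab : 2 < s := by omega
  have hbc : s < s + 1 := by omega
  have hcd : s + 1 < 2 * s := by omega
  apply orderly_of_step rfl
  intro x j hj
  interval_cases j
  · exact grd_step_one (W := u) (k := 4) rfl x
  · -- coin 2
    refine lift4 2 s (s+1) (2*s) h1 hab hbc hcd 2 (by omega) (by omega) ?_ ?_ x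
    · intro v hv hvd
      have hcv : grd u 3 (v + 2 - 2 * s) ≤ 1 := by
        rcases (by omega : v + 2 - 2 * s = 0 ∨ v + 2 - 2 * s = 1) with h' | h'
        · rw [h', grd_zero]; omega
        · rw [h', sp3a s hs 1 (by omega)]
      have hlb : 1 ≤ grd u 3 v := grd_pos rfl (by omega)
      rcases (by omega : v + 2 - 2 * s = 0 ∨ v + 2 - 2 * s = 1) with h' | h'
      · rw [h', grd_zero]; omega
      · rw [h', sp3a s hs 1 (by omega)]
        omega
    · intro v hvd
      by_cases hv1 : v + 2 < s
      · rw [sp3a s hs (v+2) hv1, sp3a s hs v (by omega)]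
        omega
      by_cases hv2 : v + 2 = s
      · rw [hv2, sp3b s hs, sp3a s hs v (by omega)]
        omega
      by_cases hv3 : v + 2 = s + 1
      · rw [hv3, sp3c s hs (s+1) (by omega) (by omega), sp3a s hs v (by omega)]
        omega
      by_cases hv4 : v = s
      · rw [hv4, sp3b s hs, sp3c s hs (s+2) (by omega) (by omega)]
        omega
      · rw [sp3c s hs (v+2) (by omega) (by omega), sp3c s hs v (by omega) (by omega)]
        omega
  · -- coin s
    refine lift4 2 s (s+1) (2*s) h1 hab hbc hcd s (by omega) (by omega) ?_ ?_ x
    · intro v hv hvd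
      by_cases hv1 : v = s
      · rw [hv1, show s + s - 2 * s = 0 by omega, grd_zero]
        omega
      · rw [show v + s - 2 * s = v - s by omega, sp3a s hs (v - s) (by omega),
          sp3c s hs v (by omega) (by omega)]
        omega
    · intro v hvd
      by_cases hv0 : v = 0
      · rw [hv0, grd_zero]
        rw [show 0 + s = s by omega, sp3b s hs]
      · rw [sp3c s hs (v + s) (by omega) (by omega), sp3a s hs v (by omega)]
        omega
  · -- coin s+1
    refine lift4 2 s (s+1) (2*s) h1 hab hbc hcd (s+1) (by omega) (by omega) ?_ ?_ x
    · intro v hv hvd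
      by_cases hv1 : v + 1 = s
      · rw [show v + (s+1) - 2*s = 0 by omega, grd_zero]
        omega
      by_cases hv2 : v = s
      · rw [show v + (s+1) - 2*s = 1 by omega, sp3a s hs 1 (by omega), hv2, sp3b s hs]
      by_cases hv3 : v = 2*s - 1
      · rw [show v + (s+1) - 2*s = s by omega, sp3b s hs,
          sp3c s hs v (by omega) (by omega)]
        omega
      · rw [show v + (s+1) - 2*s = v - s + 1 by omega, sp3a s hs (v - s + 1) (by omega),
          sp3c s hs v (by omega) (by omega)]
        omega
    · intro v hvd
      rw [sp3c s hs (v + (s+1)) (by omega) (by omega), sp3a s hs v (by omega)]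
      omega
  · -- coin 2s (top)
    show grd u 4 (x + 2 * s) ≤ grd u 4 x + 1
    rw [g4_addtop 2 s (s+1) (2*s) h1 hab hbc hcd]

end SpecialFamily

end FCP


/-- A five-coin currency `(1, a₁, a₂, a₃, a₄)` is orderly iff either it is
`(1, 2, a, a+1, 2a)` for some `a ≥ 4`, or it is totally orderly. -/
theorem five_coin_orderly_iff (a₁ a₂ a₃ a₄ : ℕ)
    (h1 : 1 < a₁) (h2 : a₁ < a₂) (h3 : a₂ < a₃) (h4 : a₃ < a₄) :
    Orderly (fun i => if i = 0 then 1 else if i = 1 then a₁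
      else if i = 2 then a₂ else if i = 3 then a₃ else a₄) 4 ↔
      ((∃ a : ℕ, 4 ≤ a ∧ a₁ = 2 ∧ a₂ = a ∧ a₃ = a + 1 ∧ a₄ = 2 * a) ∨
        ∀ l ≤ 4, Orderly (fun i => if i = 0 then 1 else if i = 1 then a₁
          else if i = 2 then a₂ else if i = 3 then a₃ else a₄) l) := by
  show Orderly (FCP.wf a₁ a₂ a₃ a₄) 4 ↔
    ((∃ a : ℕ, 4 ≤ a ∧ a₁ = 2 ∧ a₂ = a ∧ a₃ = a + 1 ∧ a₄ = 2 * a) ∨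
      ∀ l ≤ 4, Orderly (FCP.wf a₁ a₂ a₃ a₄) l)
  constructor
  · intro hO5
    by_cases hO4 : Orderly (FCP.wf a₁ a₂ a₃ a₄) 3
    · right
      intro l hl
      interval_cases l
      · exact FCP.orderly0 a₁ a₂ a₃ a₄
      · exact FCP.orderly1 a₁ a₂ a₃ a₄ h1
      · exact FCP.ord3_ord2 a₁ a₂ a₃ a₄ h1 h2 h3 hO4
      · exact hO4
      · exact hO5
    · left
      obtain ⟨ha2, hc, hd, hb4⟩ := FCP.T5 a₁ a₂ a₃ a₄ h1 h2 h3 h4 hO5 hO4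
      exact ⟨a₂, hb4, ha2, rfl, by omega, by omega⟩
  · rintro (⟨t, ht4, rfl, rfl, rfl, rfl⟩ | htot)
    · exact FCP.special_orderly _ ht4
    · exact htot 4 le_rfl
end

section
/- For every integer a ≥ 4, the currency (1, 2, a, a+1, 2a) is orderly, while its prefix currency (1, 2, a, a+1) is not orderly. -/
set_option linter.unusedSectionVars false



def Af (a : ℕ) : ℕ → ℕ := fun i => if i = 0 then 1 else if i = 1 then 2
      else if i = 2 then a else if i = 3 then a + 1 else 2 * a

def hh (a r : ℕ) : ℕ := if r < a then (r + 1) / 2 else if r = a then 1 else (r - a) / 2 + 1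

def G (a c : ℕ) : ℕ := c / (2 * a) + hh a (c % (2 * a))

section
variable (a : ℕ) (ha : 4 ≤ a)

lemma best_le (k c : ℕ) (v : ℕ) (hv : ∀ j, j ≤ k → Af a j ≤ c → Af a j ≤ v) :
    bestCoin (Af a) k c ≤ v := by
  apply Finset.sup_le
  intro j hj
  simp only [Finset.mem_filter, Finset.mem_range] at hj
  exact hv j (by omega) hj.2

lemma le_best (k c j : ℕ) (hj : j ≤ k) (hle : Af a j ≤ c) : Af a j ≤ bestCoin (Af a) k c := by
  apply Finset.le_sup
  simp only [Finset.mem_filter, Finset.mem_range]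
  exact ⟨by omega, hle⟩

include ha

lemma best4 (c : ℕ) : bestCoin (Af a) 4 c =
    if 2 * a ≤ c then 2 * a else if a + 1 ≤ c then a + 1 else if c = a then a
    else if 2 ≤ c then 2 else if 1 ≤ c then 1 else 0 := by
  split_ifs with h1 h2 h3 h4 h5
  · exact le_antisymm (best_le a 4 c (2 * a) (by intro j mj _; unfold Af; split_ifs <;> omega))
      (by have := le_best a 4 c 4 (by omega) (by unfold Af; simp; omega); simpa [Af] using this)
  · refine le_antisymm (best_le a 4 c (a + 1) ?_)
      (by have := le_best a 4 c 3 (by omega) (by unfold Af; simp; omega); simpa [Af] using this)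
    intro j mj hle; unfold Af at *; split_ifs at * <;> omega
  · refine le_antisymm (best_le a 4 c a ?_)
      (by have := le_best a 4 c 2 (by omega) (by unfold Af; simp; omega); simpa [Af] using this)
    intro j mj hle; unfold Af at *; split_ifs at * <;> omega
  · refine le_antisymm (best_le a 4 c 2 ?_)
      (by have := le_best a 4 c 1 (by omega) (by unfold Af; simp; omega); simpa [Af] using this)
    intro j mj hle; unfold Af at *; split_ifs at * <;> omega
  · refine le_antisymm (best_le a 4 c 1 ?_)
      (by have := le_best a 4 c 0 (by omega) (by unfold Af; simp; omega); simpa [Af] using this)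
    intro j mj hle; unfold Af at *; split_ifs at * <;> omega
  · refine le_antisymm (best_le a 4 c 0 ?_) (by omega)
    intro j mj hle; unfold Af at *; split_ifs at * <;> omega

lemma G_small {c : ℕ} (hc : c < 2 * a) : G a c = hh a c := by
  unfold G
  rw [Nat.div_eq_of_lt hc, Nat.mod_eq_of_lt hc, Nat.zero_add]

lemma G_add (m : ℕ) : G a (m + 2 * a) = G a m + 1 := by
  unfold G
  rw [Nat.add_div_right _ (by omega), Nat.add_mod_right]
  omega

lemma grd_eq (c : ℕ) : grd (Af a) 4 c = G a c := by
  induction c using Nat.strong_induction_on with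
  | _ c IH =>
    match c with
    | 0 => simp [grd, G, hh]; omega
    | n + 1 =>
      have hb := best4 a ha (n + 1)
      have h1 : 1 ≤ bestCoin (Af a) 4 (n + 1) := by rw [hb]; split_ifs <;> omega
      rw [grd, dif_pos h1, hb] at *
      by_cases hA : 2 * a ≤ n + 1
      · rw [if_pos hA]
        have h2 : n + 1 - 2 * a < n + 1 := by omega
        rw [IH _ h2]
        have hm : n + 1 - 2 * a + 2 * a = n + 1 := by omega
        have hG := G_add a ha (n + 1 - 2 * a)
        rw [hm] at hG
        omega
      · rw [if_neg hA]
        have hGc : G a (n + 1) = hh a (n + 1) := G_small a ha (by omega)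
        by_cases hB : a + 1 ≤ n + 1
        · rw [if_pos hB, IH _ (by omega), G_small a ha (by omega), hGc]
          unfold hh; split_ifs <;> omega
        · rw [if_neg hB]
          by_cases hC : n + 1 = a
          · rw [if_pos hC, IH _ (by omega), G_small a ha (by omega), hGc]
            unfold hh; split_ifs <;> omega
          · rw [if_neg hC]
            by_cases hD : 2 ≤ n + 1
            · rw [if_pos hD, IH _ (by omega), G_small a ha (by omega), hGc]
              unfold hh; split_ifs <;> omega
            · rw [if_neg hD, if_pos (by omega : 1 ≤ n + 1), IH _ (by omega),
                G_small a ha (by omega), hGc]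
              unfold hh; split_ifs <;> omega

lemma G_key (v : ℕ) (hv : v = 1 ∨ v = 2 ∨ v = a ∨ v = a + 1 ∨ v = 2 * a) :
    ∀ c, v ≤ c → G a c ≤ G a (c - v) + 1 := by
  intro c
  induction c using Nat.strong_induction_on with
  | _ c IH =>
    intro hvc
    by_cases hbig : 2 * a + v ≤ c
    · obtain ⟨m, rfl⟩ : ∃ m, c = m + 2 * a := ⟨c - 2 * a, by omega⟩
      have h1 : m + 2 * a - v = (m - v) + 2 * a := by omega
      rw [G_add a ha, h1, G_add a ha]
      have := IH m (by omega) (by omega)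
      omega
    · have hcv : G a (c - v) = hh a (c - v) := G_small a ha (by omega)
      by_cases hc2 : c < 2 * a
      · rw [G_small a ha hc2, hcv]
        unfold hh; rcases hv with rfl|rfl|rfl|rfl|rfl <;> split_ifs <;> omega
      · obtain ⟨m, rfl⟩ : ∃ m, c = m + 2 * a := ⟨c - 2 * a, by omega⟩
        rw [G_add a ha, G_small a ha (by omega), hcv]
        have h1 : m + 2 * a - v = (2 * a - v) + m := by omega
        unfold hh; rcases hv with rfl|rfl|rfl|rfl|rfl <;> split_ifs <;> omega

end



lemma grd_unfold (A : ℕ → ℕ) (k c : ℕ) (hc : 0 < c) (h1 : 1 ≤ bestCoin A k c) :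
    grd A k c = grd A k (c - bestCoin A k c) + 1 := by
  obtain ⟨n, rfl⟩ : ∃ n, c = n + 1 := ⟨c - 1, by omega⟩
  rw [grd, dif_pos h1]

section
variable (a : ℕ) (ha : 4 ≤ a)

lemma grd_pos (k c : ℕ) (hc : 1 ≤ c) : 1 ≤ grd (Af a) k c := by
  have h0 : Af a 0 ≤ bestCoin (Af a) k c :=
    le_best a k c 0 (Nat.zero_le k) (by simp [Af]; omega)
  have h1 : 1 ≤ bestCoin (Af a) k c := by simpa [Af] using h0
  rw [grd_unfold (Af a) k c hc h1]
  omega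

include ha

lemma Af_pos (j : ℕ) : 1 ≤ Af a j := by
  unfold Af; split_ifs <;> omega

lemma Af_cases (j : ℕ) : Af a j = 1 ∨ Af a j = 2 ∨ Af a j = a ∨ Af a j = a + 1 ∨ Af a j = 2 * a := by
  unfold Af; split_ifs <;> simp

lemma grd_key (v c : ℕ) (hv : v = 1 ∨ v = 2 ∨ v = a ∨ v = a + 1 ∨ v = 2 * a)
    (hvc : v ≤ c) : grd (Af a) 4 c ≤ grd (Af a) 4 (c - v) + 1 := by
  rw [grd_eq a ha, grd_eq a ha]
  exact G_key a ha v hv c hvc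

lemma exists_repr (c : ℕ) :
    ∃ x : Fin 5 → ℕ, (∑ i, x i) = grd (Af a) 4 c ∧ (∑ i, x i * Af a i.1) = c := by
  induction c using Nat.strong_induction_on with
  | _ c IH =>
    match c with
    | 0 => exact ⟨0, by simp [grd], by simp⟩
    | n + 1 =>
      have hj : ∃ j : Fin 5, Af a j.1 = bestCoin (Af a) 4 (n + 1) ∧ Af a j.1 ≤ n + 1 := by
        rw [best4 a ha]
        split_ifs with hA hB hC hD hE
        · exact ⟨⟨4, by omega⟩, by simp [Af], by simp [Af]; omega⟩
        · exact ⟨⟨3, by omega⟩, by simp [Af], by simp [Af]; omega⟩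
        · exact ⟨⟨2, by omega⟩, by simp [Af], by simp [Af]; omega⟩
        · exact ⟨⟨1, by omega⟩, by simp [Af], by simp [Af]; omega⟩
        · exact ⟨⟨0, by omega⟩, by simp [Af], by simp [Af]⟩
        · omega
      obtain ⟨j, hjb, hjle⟩ := hj
      have h1 : 1 ≤ bestCoin (Af a) 4 (n + 1) := hjb ▸ Af_pos a ha j.1
      obtain ⟨x, hs, hval⟩ := IH (n + 1 - bestCoin (Af a) 4 (n + 1)) (by omega)
      refine ⟨fun i => if i = j then x i + 1 else x i, ?_, ?_⟩
      · rw [grd_unfold (Af a) 4 (n + 1) (by omega) h1]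
        have he : ∀ i : Fin 5, (if i = j then x i + 1 else x i) = x i + (if i = j then 1 else 0) := by
          intro i; split_ifs <;> simp
        simp_rw [he, Finset.sum_add_distrib, Finset.sum_ite_eq']
        simp [hs]
      · have he : ∀ i : Fin 5, (if i = j then x i + 1 else x i) * Af a i.1
            = x i * Af a i.1 + (if i = j then Af a i.1 else 0) := by
          intro i; split_ifs <;> ring
        simp_rw [he, Finset.sum_add_distrib, Finset.sum_ite_eq']
        simp only [Finset.mem_univ, if_true]
        rw [hval, hjb]
        omega

lemma repr_ge (c : ℕ) : ∀ x : Fin 5 → ℕ, (∑ i, x i * Af a i.1) = c → grd (Af a) 4 c ≤ ∑ i, x i := by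
  induction c using Nat.strong_induction_on with
  | _ c IH =>
    intro x hval
    by_cases hc : c = 0
    · subst hc; simp [grd]
    · have hex : ∃ j : Fin 5, 1 ≤ x j := by
        by_contra hno
        push_neg at hno
        have : ∀ j : Fin 5, x j = 0 := fun j => by have := hno j; omega
        rw [Fin.sum_univ_five] at hval
        rw [this 0, this 1, this 2, this 3, this 4] at hval
        simp at hval
        omega
      obtain ⟨j, hj⟩ := hex
      set x' : Fin 5 → ℕ := fun i => x i - if i = j then 1 else 0 with hx'
      have hvcases : Af a j.1 = 1 ∨ Af a j.1 = 2 ∨ Af a j.1 = a ∨ Af a j.1 = a + 1 ∨ Af a j.1 = 2 * a :=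
        Af_cases a ha j.1
      have hvc : Af a j.1 ≤ c := by
        calc Af a j.1 ≤ x j * Af a j.1 := Nat.le_mul_of_pos_left _ hj
        _ ≤ ∑ i, x i * Af a i.1 :=
            Finset.single_le_sum (f := fun i : Fin 5 => x i * Af a i.1)
              (fun i _ => Nat.zero_le _) (Finset.mem_univ j)
        _ = c := hval
      have hxeq : ∀ i : Fin 5, x i = x' i + (if i = j then 1 else 0) := by
        intro i
        by_cases h : i = j
        · subst h; simp [hx']; omega
        · simp [hx', h]
      have hsum : ∑ i, x i = (∑ i, x' i) + 1 := by
        rw [Finset.sum_congr rfl (fun i _ => hxeq i), Finset.sum_add_distrib,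
          Finset.sum_ite_eq']
        simp
      have hxeq' : ∀ i : Fin 5, x i * Af a i.1
          = x' i * Af a i.1 + (if i = j then Af a i.1 else 0) := by
        intro i
        rw [hxeq i]
        split_ifs <;> ring
      have hval' : (∑ i, x' i * Af a i.1) = c - Af a j.1 := by
        have h2 : ∑ i, x i * Af a i.1 = (∑ i, x' i * Af a i.1) + Af a j.1 := by
          rw [Finset.sum_congr rfl (fun i _ => hxeq' i), Finset.sum_add_distrib,
            Finset.sum_ite_eq']
          simp
        omega
      have hkey : grd (Af a) 4 c ≤ grd (Af a) 4 (c - Af a j.1) + 1 :=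
        grd_key a ha (Af a j.1) c hvcases hvc
      have hIH := IH (c - Af a j.1) (by omega) x' hval'
      omega

lemma orderly4 : Orderly (Af a) 4 := by
  intro c _
  apply le_antisymm
  · obtain ⟨x, hs, hval⟩ := exists_repr a ha c
    exact Nat.sInf_le ⟨x, hs, hval⟩
  · have hne : {n | ∃ x : Fin 5 → ℕ, (∑ i, x i) = n ∧ (∑ i, x i * Af a i.1) = c}.Nonempty := by
      refine ⟨∑ i : Fin 5, (if i = (0 : Fin 5) then c else 0), fun i => if i = 0 then c else 0, rfl, ?_⟩
      simp [Fin.sum_univ_five, Af]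
    obtain ⟨x, hs, hval⟩ := Nat.sInf_mem hne
    rw [show opt (Af a) 4 c = sInf {n | ∃ x : Fin 5 → ℕ, (∑ i, x i) = n ∧ (∑ i, x i * Af a i.1) = c} from rfl, ← hs]
    exact repr_ge a ha c x hval

lemma best3_2a : bestCoin (Af a) 3 (2 * a) = a + 1 := by
  refine le_antisymm (best_le a 3 (2 * a) (a + 1) ?_) ?_
  · intro j mj _; unfold Af; split_ifs <;> omega
  · have := le_best a 3 (2 * a) 3 (by omega) (by unfold Af; simp; omega)
    simpa [Af] using this

lemma best3_small (c : ℕ) (h2 : 2 ≤ c) (hc : c < a) : bestCoin (Af a) 3 c = 2 := by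
  refine le_antisymm (best_le a 3 c 2 ?_) ?_
  · intro j mj hle; unfold Af at *; split_ifs at * <;> omega
  · have := le_best a 3 c 1 (by omega) (by unfold Af; simp; omega)
    simpa [Af] using this

lemma not_orderly3 : ¬ Orderly (Af a) 3 := by
  intro h
  have hgrd : 3 ≤ grd (Af a) 3 (2 * a) := by
    rw [grd_unfold (Af a) 3 (2 * a) (by omega) (by rw [best3_2a a ha]; omega), best3_2a a ha,
      show 2 * a - (a + 1) = a - 1 from by omega,
      grd_unfold (Af a) 3 (a - 1) (by omega) (by rw [best3_small a ha (a - 1) (by omega) (by omega)]; omega),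
      best3_small a ha (a - 1) (by omega) (by omega)]
    have := grd_pos a 3 (a - 1 - 2) (by omega)
    omega
  have hopt : opt (Af a) 3 (2 * a) ≤ 2 := by
    apply Nat.sInf_le
    refine ⟨fun i => if i = (2 : Fin 4) then 2 else 0, ?_, ?_⟩
    · simp [Fin.sum_univ_four]
    · simp [Fin.sum_univ_four, Af]
  have := h (2 * a) (by omega)
  omega

end

/-- For every `a ≥ 4` the currency `(1, 2, a, a+1, 2a)` is orderly, while its
prefix `(1, 2, a, a+1)` is not. -/
theorem exceptional_family (a : ℕ) (ha : 4 ≤ a) :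
    Orderly (fun i => if i = 0 then 1 else if i = 1 then 2
      else if i = 2 then a else if i = 3 then a + 1 else 2 * a) 4 ∧
    ¬ Orderly (fun i => if i = 0 then 1 else if i = 1 then 2
      else if i = 2 then a else if i = 3 then a + 1 else 2 * a) 3 := by
  exact ⟨orderly4 a ha, not_orderly3 a ha⟩
end
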